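/- arXiv:1207.0941 — 4 statements merged into one kernel-verified Lean document; each statement's English description precedes it below -/
import Mathlib

section
/- Let G be a finitely generated one-ended group with finite generating set S and Cayley graph X = Γ(G,S). Then for every integer r ≥ 2 one has V_0^X(r) ≤ 4r; consequently the end depth function V_0^X has linear growth, i.e. V_0^X(r) ∼ r. -/
/-- The Cayley graph of a group `G` with respect to a generating set `S`:
two elements are adjacent iff they differ by a generator (or inverse of one). -/
def cayleyGraph {G : Type*} [Group G] (S : Set G) : SimpleGraph G where
  Adj x y := x ≠ y ∧ (x⁻¹ * y ∈ S ∨ y⁻¹ * x ∈ S)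
  symm := ⟨fun x y h => ⟨h.1.symm, h.2.symm⟩⟩
  loopless := ⟨fun x h => h.1 rfl⟩

/-- The ball of radius `r` centered at the identity in the Cayley graph,
with respect to the word (graph) metric. -/
def cayleyBall {G : Type*} [Group G] (S : Set G) (r : ℕ) : Set G :=
  {x : G | (cayleyGraph S).dist 1 x ≤ r}

/-- `x` and `y` can be joined by a path in the Cayley graph avoiding the ball `B(r)`. -/
def JoinedOutside {G : Type*} [Group G] (S : Set G) (r : ℕ) (x y : G) : Prop :=
  ∃ p : (cayleyGraph S).Walk x y, ∀ v ∈ p.support, v ∉ cayleyBall S r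

/-- The end depth function `V₀(r)`: the least `k` such that any two points outside `B(k)`
can be joined by a path avoiding `B(r)`. -/
noncomputable def endDepth {G : Type*} [Group G] (S : Set G) (r : ℕ) : ℕ :=
  sInf {k : ℕ | ∀ x y : G, x ∉ cayleyBall S k → y ∉ cayleyBall S k → JoinedOutside S r x y}

/-- The number of ends of the Cayley graph of `G` w.r.t. `S`: the supremum over finite
(i.e. compact) sets `K` of the number of infinite (i.e. unbounded) connected components
of the complement of `K`. -/
noncomputable def numEnds {G : Type*} [Group G] (S : Set G) : ℕ∞ :=
  ⨆ (K : Set G) (_ : K.Finite),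
    ENat.card {C : (cayleyGraph S).ComponentCompl K // C.supp.Infinite}

/-- `f` grows at most as fast as `g`. -/
def GrowthLE (f g : ℕ → ℕ) : Prop :=
  ∃ a₁ a₂ a₃ : ℕ, 0 < a₁ ∧ 0 < a₂ ∧ ∀ x : ℕ, f x ≤ a₁ * g (a₂ * x) + a₃

namespace EndDepthAux

open SimpleGraph

variable {G : Type*} [Group G] {S : Set G}

lemma cayley_adj {x y : G} :
    (cayleyGraph S).Adj x y ↔ x ≠ y ∧ (x⁻¹ * y ∈ S ∨ y⁻¹ * x ∈ S) := Iff.rfl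

lemma adj_mul_left (g : G) {x y : G} (h : (cayleyGraph S).Adj x y) :
    (cayleyGraph S).Adj (g * x) (g * y) := by
  rw [cayley_adj] at h ⊢
  refine ⟨fun he => h.1 (mul_left_cancel he), ?_⟩
  simpa [mul_assoc, mul_inv_rev] using h.2

/-- Left multiplication as an automorphism of the Cayley graph. -/
def mulIso (g : G) (S : Set G) : cayleyGraph S ≃g cayleyGraph S where
  toEquiv := Equiv.mulLeft g
  map_rel_iff' := by
    intro x y
    constructor
    · intro h
      have := adj_mul_left g⁻¹ h
      simpa using this
    · exact fun h => adj_mul_left g h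

@[simp] lemma mulIso_apply (g x : G) : (mulIso g S) x = g * x := rfl

lemma reachable_mul_left (g : G) {x y : G} (h : (cayleyGraph S).Reachable x y) :
    (cayleyGraph S).Reachable (g * x) (g * y) := by
  obtain ⟨p⟩ := h
  exact ⟨p.map (mulIso g S).toHom⟩

lemma reachable_one (hgen : Subgroup.closure S = ⊤) (x : G) :
    (cayleyGraph S).Reachable 1 x := by
  have hx : x ∈ Subgroup.closure S := by rw [hgen]; trivial
  induction hx using Subgroup.closure_induction with
  | mem s hs =>
    rcases eq_or_ne (1 : G) s with h | h
    · rw [← h]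
    · exact (Adj.reachable ⟨h, Or.inl (by simpa using hs)⟩)
  | one => rfl
  | mul a b _ _ ha hb =>
    refine ha.trans ?_
    have := reachable_mul_left a hb
    simpa using this
  | inv a _ ha =>
    have := reachable_mul_left a⁻¹ ha
    simp only [mul_one, inv_mul_cancel] at this
    exact this.symm

lemma cayley_connected (hgen : Subgroup.closure S = ⊤) : (cayleyGraph S).Connected := by
  have hpre : (cayleyGraph S).Preconnected := by
    intro x y
    have := reachable_mul_left x (((reachable_one hgen (x⁻¹ * x)).symm).trans
      (reachable_one hgen (x⁻¹ * y)))
    simpa using this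
  have : Nonempty G := ⟨1⟩
  exact ⟨hpre⟩

lemma dist_mul_left (hgen : Subgroup.closure S = ⊤) (g x y : G) :
    (cayleyGraph S).dist (g * x) (g * y) = (cayleyGraph S).dist x y := by
  have hc := cayley_connected hgen
  have key : ∀ (a : G) (u v : G),
      (cayleyGraph S).dist (a * u) (a * v) ≤ (cayleyGraph S).dist u v := by
    intro a u v
    obtain ⟨p, hp⟩ := hc.exists_walk_length_eq_dist u v
    calc (cayleyGraph S).dist (a * u) (a * v) ≤ (p.map (mulIso a S).toHom).length :=
          dist_le _
      _ = p.length := Walk.length_map _ _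
      _ = _ := hp
  refine le_antisymm (key g x y) ?_
  have := key g⁻¹ (g * x) (g * y)
  simpa using this

end EndDepthAux

namespace EndDepthAux

open SimpleGraph

variable {G : Type*} [Group G] {S : Set G}

/-- Walks avoiding a set `A`. -/
def AW (S : Set G) (A : Set G) (x y : G) : Prop :=
  ∃ p : (cayleyGraph S).Walk x y, ∀ v ∈ p.support, v ∉ A

lemma joinedOutside_iff {r : ℕ} {x y : G} :
    JoinedOutside S r x y ↔ AW S (cayleyBall S r) x y := Iff.rfl

namespace AW

variable {A B : Set G} {x y z : G}

lemma refl (h : x ∉ A) : AW S A x x :=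
  ⟨Walk.nil, by simpa using h⟩

lemma symm (h : AW S A x y) : AW S A y x := by
  obtain ⟨p, hp⟩ := h
  exact ⟨p.reverse, fun v hv => hp v (by simpa [Walk.support_reverse] using hv)⟩

lemma trans (h : AW S A x y) (h' : AW S A y z) : AW S A x z := by
  obtain ⟨p, hp⟩ := h
  obtain ⟨q, hq⟩ := h'
  refine ⟨p.append q, fun v hv => ?_⟩
  rcases (Walk.mem_support_append_iff _ _).1 hv with h | h
  · exact hp v h
  · exact hq v h

lemma not_mem_left (h : AW S A x y) : x ∉ A := by
  obtain ⟨p, hp⟩ := h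
  exact hp x p.start_mem_support

lemma not_mem_right (h : AW S A x y) : y ∉ A :=
  h.symm.not_mem_left

lemma mono (hBA : B ⊆ A) (h : AW S A x y) : AW S B x y := by
  obtain ⟨p, hp⟩ := h
  exact ⟨p, fun v hv hvB => hp v hv (hBA hvB)⟩

lemma cons (h : (cayleyGraph S).Adj x y) (hx : x ∉ A) (h' : AW S A y z) : AW S A x z := by
  obtain ⟨p, hp⟩ := h'
  refine ⟨Walk.cons h p, fun v hv => ?_⟩
  rcases by simpa [Walk.support_cons] using hv with rfl | hv'
  · exact hx
  · exact hp v hv'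

lemma mulLeft (g : G) (h : AW S A x y) : AW S ((g * ·) '' A) (g * x) (g * y) := by
  obtain ⟨p, hp⟩ := h
  refine ⟨p.map (mulIso g S).toHom, fun v hv => ?_⟩
  replace hv : v ∈ p.support.map (mulIso g S).toHom := by rw [← Walk.support_map]; exact hv
  obtain ⟨u, hu, rfl⟩ := List.mem_map.1 hv
  rintro ⟨a, ha, hav⟩
  have : a = u := by
    have : g * a = g * u := hav
    exact mul_left_cancel this
  exact hp u hu (this ▸ ha)

end AW

lemma image_mulLeft_image (g : G) (A : Set G) : (g⁻¹ * ·) '' ((g * ·) '' A) = A := by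
  ext a
  constructor
  · rintro ⟨b, ⟨c, hc, rfl⟩, rfl⟩
    simpa using hc
  · intro ha
    exact ⟨g * a, ⟨a, ha, rfl⟩, by simp⟩

lemma AW.mulLeft_iff (g : G) {A : Set G} {x y : G} :
    AW S ((g * ·) '' A) (g * x) (g * y) ↔ AW S A x y := by
  constructor
  · intro h
    have := h.mulLeft g⁻¹
    rw [image_mulLeft_image] at this
    simpa using this
  · exact fun h => h.mulLeft g

/-- Points whose `A`-avoiding class is infinite. -/
def Deep (S : Set G) (A : Set G) (x : G) : Prop :=
  {y | AW S A x y}.Infinite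

lemma Deep.not_mem {A : Set G} {x : G} (h : Deep S A x) : x ∉ A := by
  obtain ⟨y, hy⟩ := h.nonempty
  exact (AW.not_mem_left hy)

lemma class_eq {A : Set G} {x y : G} (h : AW S A x y) :
    {z | AW S A x z} = {z | AW S A y z} := by
  ext z
  exact ⟨fun hz => h.symm.trans hz, fun hz => h.trans hz⟩

lemma Deep.congr {A : Set G} {x y : G} (h : AW S A x y) : Deep S A x ↔ Deep S A y := by
  unfold Deep
  rw [class_eq h]

lemma Deep.mulLeft_iff (g : G) {A : Set G} {x : G} :
    Deep S ((g * ·) '' A) (g * x) ↔ Deep S A x := by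
  have hcl : {z | AW S ((g * ·) '' A) (g * x) z} = (g * ·) '' {y | AW S A x y} := by
    ext z
    constructor
    · intro hz
      refine ⟨g⁻¹ * z, ?_, by simp⟩
      have := AW.mulLeft g⁻¹ hz
      rw [image_mulLeft_image] at this
      simpa using this
    · rintro ⟨y, hy, rfl⟩
      exact AW.mulLeft g hy
  unfold Deep
  rw [hcl]
  rw [Set.infinite_image_iff (Set.injOn_of_injective (mul_right_injective g))]

end EndDepthAux

namespace EndDepthAux

open SimpleGraph

variable {G : Type*} [Group G] {S : Set G}

local notation "X" => cayleyGraph S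

/-- Ball centered at `g`. -/
def ballAt (S : Set G) (g : G) (r : ℕ) : Set G :=
  {x : G | (cayleyGraph S).dist g x ≤ r}

lemma mem_ballAt {g x : G} {r : ℕ} : x ∈ ballAt S g r ↔ (cayleyGraph S).dist g x ≤ r := Iff.rfl

lemma ballAt_one (r : ℕ) : ballAt S 1 r = cayleyBall S r := rfl

lemma image_ballAt (hgen : Subgroup.closure S = ⊤) (g h : G) (r : ℕ) :
    (g * ·) '' ballAt S h r = ballAt S (g * h) r := by
  ext x
  constructor
  · rintro ⟨y, hy, rfl⟩
    simpa [mem_ballAt, dist_mul_left hgen] using hy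
  · intro hx
    refine ⟨g⁻¹ * x, ?_, by simp⟩
    have : (cayleyGraph S).dist (g⁻¹ * (g * h)) (g⁻¹ * x) ≤ r := by
      rw [dist_mul_left hgen]; exact hx
    simpa [mem_ballAt] using this

lemma dist_adj {x y : G} (h : (cayleyGraph S).Adj x y) : (cayleyGraph S).dist x y ≤ 1 := by
  simpa using dist_le (Walk.cons h Walk.nil)

lemma dist_le_of_mem_support (hgen : Subgroup.closure S = ⊤) {a b v : G}
    (p : (cayleyGraph S).Walk a b) (hv : v ∈ p.support) :
    (cayleyGraph S).dist a v ≤ p.length := by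
  have hc := cayley_connected hgen
  induction p with
  | nil =>
    simp only [Walk.support_nil, List.mem_singleton] at hv
    subst hv; simp
  | @cons u w b h q ih =>
    rcases by simpa [Walk.support_cons] using hv with rfl | hv'
    · rw [SimpleGraph.dist_self]; omega
    · calc (cayleyGraph S).dist u v ≤ (cayleyGraph S).dist u w + (cayleyGraph S).dist w v :=
           hc.dist_triangle
        _ ≤ 1 + q.length := Nat.add_le_add (dist_adj h) (ih hv')
        _ = (Walk.cons h q).length := by simp [Walk.length_cons, Nat.add_comm]

/-- One can step down the distance by one. -/
lemma exists_adj_dist_pred (hgen : Subgroup.closure S = ⊤) {x : G}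
    (h : (cayleyGraph S).dist 1 x ≠ 0) :
    ∃ w, (cayleyGraph S).Adj x w ∧
      (cayleyGraph S).dist 1 w + 1 = (cayleyGraph S).dist 1 x := by
  have hc := cayley_connected hgen
  obtain ⟨p, hp⟩ := hc.exists_walk_length_eq_dist x 1
  cases p with
  | nil =>
    exfalso
    rw [Walk.length_nil] at hp
    rw [SimpleGraph.dist_comm] at h
    omega
  | @cons u w b hadj q =>
    refine ⟨w, hadj, ?_⟩
    have h1 : (cayleyGraph S).dist 1 w ≤ q.length := by
      have := dist_le q
      rwa [SimpleGraph.dist_comm] at this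
    have h2 : (cayleyGraph S).dist 1 x ≤ (cayleyGraph S).dist 1 w + 1 := by
      calc (cayleyGraph S).dist 1 x ≤ (cayleyGraph S).dist 1 w + (cayleyGraph S).dist w x :=
            hc.dist_triangle
        _ ≤ (cayleyGraph S).dist 1 w + 1 := by
            have := dist_adj hadj.symm
            omega
    have h3 : q.length + 1 = (cayleyGraph S).dist 1 x := by
      rw [SimpleGraph.dist_comm]
      simpa [Walk.length_cons] using hp
    omega

lemma ball_finite (hS : S.Finite) (hgen : Subgroup.closure S = ⊤) (r : ℕ) :
    (cayleyBall S r).Finite := by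
  induction r with
  | zero =>
    refine Set.Finite.subset (Set.finite_singleton 1) ?_
    intro x hx
    have : (cayleyGraph S).dist 1 x = 0 := Nat.le_zero.1 hx
    have hreach := (cayley_connected hgen) 1 x
    have := Reachable.dist_eq_zero_iff hreach |>.1 this
    simp [this.symm]
  | succ n ih =>
    have hsub : cayleyBall S (n + 1) ⊆ cayleyBall S n ∪
        (fun p : G × G => p.1 * p.2) '' ((cayleyBall S n) ×ˢ (S ∪ S⁻¹)) := by
      intro x hx
      by_cases hxn : x ∈ cayleyBall S n
      · exact Or.inl hxn
      · have hne : (cayleyGraph S).dist 1 x ≠ 0 := by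
          intro h0
          exact hxn (by simp [cayleyBall, h0])
        obtain ⟨w, hadj, hw⟩ := exists_adj_dist_pred hgen hne
        have hxball : (cayleyGraph S).dist 1 x ≤ n + 1 := hx
        have hwn : w ∈ cayleyBall S n := by
          simp only [cayleyBall, Set.mem_setOf_eq]
          omega
        refine Or.inr ⟨⟨w, w⁻¹ * x⟩, ⟨hwn, ?_⟩, by simp⟩
        rcases hadj.2 with hs | hs
        · right
          simpa using Set.inv_mem_inv.mpr hs
        · left; exact hs
    refine Set.Finite.subset (Set.Finite.union ih ?_) hsub
    exact Set.Finite.image _ (Set.Finite.prod ih (hS.union hS.inv))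

lemma exists_dist_le (hgen : Subgroup.closure S = ⊤) :
    ∀ (n : ℕ) (x : G), (cayleyGraph S).dist 1 x = n → ∀ j ≤ n, ∃ y, (cayleyGraph S).dist 1 y = j := by
  intro n
  induction n with
  | zero => intro x hx j hj; exact ⟨x, by omega⟩
  | succ k ih =>
    intro x hx j hj
    rcases Nat.lt_or_ge j (k + 1) with hlt | hge
    · obtain ⟨w, _, hw⟩ := exists_adj_dist_pred hgen (x := x) (by omega)
      exact ih w (by omega) j (by omega)
    · exact ⟨x, by omega⟩

lemma exists_dist_eq (hS : S.Finite) (hgen : Subgroup.closure S = ⊤) [Infinite G] (k : ℕ) :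
    ∃ y, (cayleyGraph S).dist 1 y = k := by
  obtain ⟨x, hx⟩ := (ball_finite hS hgen k).infinite_compl.nonempty
  have hxk : ¬ (cayleyGraph S).dist 1 x ≤ k := hx
  exact exists_dist_le hgen _ x rfl k (by omega)

/-- Exit lemma: a walk from outside `A` to inside `A` crosses the boundary. -/
lemma exit {A : Set G} : ∀ {x y : G} (p : (cayleyGraph S).Walk x y), x ∉ A → y ∈ A →
    ∃ c z, (cayleyGraph S).Adj c z ∧ c ∉ A ∧ z ∈ A ∧ AW S A x c := by
  intro x y p
  induction p with
  | nil => intro hx hy; exact absurd hy hx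
  | @cons u v w h q ih =>
    intro hx hy
    by_cases hv : v ∈ A
    · exact ⟨u, v, h, hx, hv, AW.refl hx⟩
    · obtain ⟨c, z, hcz, hc, hz, hAW⟩ := ih hv hy
      exact ⟨c, z, hcz, hc, hz, AW.cons h hx hAW⟩

lemma exists_boundary (hgen : Subgroup.closure S = ⊤) {r : ℕ} {x : G}
    (hx : x ∉ cayleyBall S r) :
    ∃ c z, (cayleyGraph S).Adj c z ∧ c ∉ cayleyBall S r ∧ z ∈ cayleyBall S r ∧
      AW S (cayleyBall S r) x c ∧ c ∈ cayleyBall S (r + 1) := by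
  have hc := cayley_connected hgen
  obtain ⟨p⟩ := hc x 1
  have h1 : (1 : G) ∈ cayleyBall S r := by
    simp only [cayleyBall, Set.mem_setOf_eq, SimpleGraph.dist_self]
    omega
  obtain ⟨c, z, hcz, hcn, hzm, hAW⟩ := exit p hx h1
  refine ⟨c, z, hcz, hcn, hzm, hAW, ?_⟩
  have : (cayleyGraph S).dist 1 c ≤ (cayleyGraph S).dist 1 z + 1 := by
    calc (cayleyGraph S).dist 1 c ≤ (cayleyGraph S).dist 1 z + (cayleyGraph S).dist z c :=
          hc.dist_triangle
      _ ≤ (cayleyGraph S).dist 1 z + 1 := by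
          have := dist_adj hcz.symm
          omega
  have hz' : (cayleyGraph S).dist 1 z ≤ r := hzm
  simp only [cayleyBall, Set.mem_setOf_eq]
  omega

/-- Geodesics from a far point stay outside the ball. -/
lemma aw_of_far (hgen : Subgroup.closure S = ⊤) {r : ℕ} {m w : G}
    (h : r + 1 + (cayleyGraph S).dist m w ≤ (cayleyGraph S).dist 1 m) :
    AW S (cayleyBall S r) m w := by
  have hc := cayley_connected hgen
  obtain ⟨p, hp⟩ := hc.exists_walk_length_eq_dist m w
  refine ⟨p, fun v hv => ?_⟩
  have h1 : (cayleyGraph S).dist m v ≤ (cayleyGraph S).dist m w := by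
    have := dist_le_of_mem_support hgen p hv
    omega
  have h2 : (cayleyGraph S).dist 1 m ≤ (cayleyGraph S).dist 1 v + (cayleyGraph S).dist m v := by
    have := hc.dist_triangle (u := (1:G)) (v := v) (w := m)
    rwa [SimpleGraph.dist_comm (u := v) (v := m)] at this
  intro hvball
  have : (cayleyGraph S).dist 1 v ≤ r := hvball
  omega

/-- Geodesics between points of the small ball avoid a far ball. -/
lemma aw_ballAt_of_near (hgen : Subgroup.closure S = ⊤) {r : ℕ} {m a : G}
    (ha : (cayleyGraph S).dist 1 a ≤ r) (hm : 2 * r + 1 ≤ (cayleyGraph S).dist 1 m) :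
    AW S (ballAt S m r) a 1 := by
  have hc := cayley_connected hgen
  obtain ⟨p, hp⟩ := hc.exists_walk_length_eq_dist (1 : G) a
  refine ⟨p.reverse, fun v hv => ?_⟩
  have hv' : v ∈ p.support := by simpa [Walk.support_reverse] using hv
  have h1 : (cayleyGraph S).dist 1 v ≤ r := by
    have := dist_le_of_mem_support hgen p hv'
    omega
  intro hvm
  have h2 : (cayleyGraph S).dist m v ≤ r := hvm
  have h3 : (cayleyGraph S).dist 1 m ≤ (cayleyGraph S).dist 1 v + (cayleyGraph S).dist m v := by
    have := hc.dist_triangle (u := (1:G)) (v := v) (w := m)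
    rwa [SimpleGraph.dist_comm (u := v) (v := m)] at this
  omega

end EndDepthAux

namespace EndDepthAux

open SimpleGraph

variable {G : Type*} [Group G] {S : Set G}

lemma compMk_eq_of_walk {K : Set G} :
    ∀ {x y : G} (p : (cayleyGraph S).Walk x y), (∀ v ∈ p.support, v ∉ K) →
      ∀ (hx : x ∉ K) (hy : y ∉ K),
        (cayleyGraph S).componentComplMk hx = (cayleyGraph S).componentComplMk hy := by
  intro x y p
  induction p with
  | nil => intro _ hx hy; rfl
  | @cons u v w h q ih =>
    intro hp hx hy
    have hv : v ∉ K := hp v (by simp [Walk.support_cons, q.start_mem_support])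
    refine (componentComplMk_eq_of_adj (cayleyGraph S) hx hv h).trans ?_
    exact ih (fun z hz => hp z (by simp [Walk.support_cons, hz])) hv hy

lemma compMk_eq_of_aw {K : Set G} {x y : G} (h : AW S K x y)
    (hx : x ∉ K) (hy : y ∉ K) :
    (cayleyGraph S).componentComplMk hx = (cayleyGraph S).componentComplMk hy := by
  obtain ⟨p, hp⟩ := h
  exact compMk_eq_of_walk p hp hx hy

lemma aw_of_compMk_eq {K : Set G} {x y : G} (hx : x ∉ K) (hy : y ∉ K)
    (h : (cayleyGraph S).componentComplMk hx = (cayleyGraph S).componentComplMk hy) :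
    AW S K x y := by
  have hr : ((cayleyGraph S).induce (Kᶜ : Set G)).Reachable ⟨x, hx⟩ ⟨y, hy⟩ :=
    ConnectedComponent.exact h
  obtain ⟨p⟩ := hr
  refine ⟨p.map (SimpleGraph.Embedding.induce (Kᶜ : Set G)).toHom, fun v hv => ?_⟩
  replace hv : v ∈ p.support.map (SimpleGraph.Embedding.induce (G := cayleyGraph S) (Kᶜ : Set G)).toHom := by
    rw [← Walk.support_map]; exact hv
  obtain ⟨u, _, rfl⟩ := List.mem_map.1 hv
  exact u.2

lemma supp_eq_class {K : Set G} {x : G} (hx : x ∉ K) :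
    ((cayleyGraph S).componentComplMk hx).supp = {y | AW S K x y} := by
  ext y
  constructor
  · rintro ⟨hy, heq⟩
    exact (aw_of_compMk_eq hy hx heq).symm
  · intro h
    exact ⟨h.not_mem_right, compMk_eq_of_aw h.symm h.not_mem_right hx⟩

lemma infinite_of_numEnds_one (hone : numEnds S = 1) : Infinite G := by
  by_contra h
  rw [not_infinite_iff_finite] at h
  have h0 : numEnds S ≤ 0 := by
    refine iSup_le fun K => iSup_le fun _ => ?_
    have hE : IsEmpty {C : (cayleyGraph S).ComponentCompl K // C.supp.Infinite} :=
      ⟨fun C => C.2 (Set.toFinite _)⟩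
    rw [(ENat.card_eq_zero_iff_empty _).2 hE]
  rw [hone] at h0
  simp at h0

lemma one_end_join (hone : numEnds S = 1) {K : Set G} (hK : K.Finite) {x y : G}
    (hx : Deep S K x) (hy : Deep S K y) : AW S K x y := by
  by_contra hne
  have hxK := hx.not_mem
  have hyK := hy.not_mem
  have hCx : ((cayleyGraph S).componentComplMk hxK).supp.Infinite := by
    rw [supp_eq_class]; exact hx
  have hCy : ((cayleyGraph S).componentComplMk hyK).supp.Infinite := by
    rw [supp_eq_class]; exact hy
  have hne' : (cayleyGraph S).componentComplMk hxK ≠ (cayleyGraph S).componentComplMk hyK :=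
    fun h => hne (aw_of_compMk_eq hxK hyK h)
  have hnt : Nontrivial {C : (cayleyGraph S).ComponentCompl K // C.supp.Infinite} :=
    ⟨⟨⟨_, hCx⟩, ⟨_, hCy⟩, by simpa [Subtype.ext_iff] using hne'⟩⟩
  have h2 : 1 < ENat.card {C : (cayleyGraph S).ComponentCompl K // C.supp.Infinite} :=
    (ENat.one_lt_card_iff_nontrivial _).2 hnt
  have hle : ENat.card {C : (cayleyGraph S).ComponentCompl K // C.supp.Infinite} ≤ numEnds S := by
    refine le_trans ?_ (le_iSup (fun K' : Set G =>
      ⨆ (_ : K'.Finite), ENat.card {C : (cayleyGraph S).ComponentCompl K' // C.supp.Infinite}) K)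
    exact le_iSup (fun _ : K.Finite =>
      ENat.card {C : (cayleyGraph S).ComponentCompl K // C.supp.Infinite}) hK
  rw [hone] at hle
  exact absurd (lt_of_lt_of_le h2 hle) (lt_irrefl _)

end EndDepthAux

namespace EndDepthAux

open SimpleGraph

variable {G : Type*} [Group G] {S : Set G}

lemma deep_of_far (hS : S.Finite) (hgen : Subgroup.closure S = ⊤) (hone : numEnds S = 1)
    {r : ℕ} (hr : 1 ≤ r) {x : G} (hx : 2 * r + 1 ≤ (cayleyGraph S).dist 1 x) :
    Deep S (cayleyBall S r) x := by
  classical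
  have hc := cayley_connected hgen
  have hinf : Infinite G := infinite_of_numEnds_one hone
  by_contra hnd
  have hxB : x ∉ cayleyBall S r := by
    intro hxB
    have : (cayleyGraph S).dist 1 x ≤ r := hxB
    omega
  set ND : Set G := {z | z ∉ cayleyBall S r ∧ ¬ Deep S (cayleyBall S r) z} with hND
  have hxND : x ∈ ND := ⟨hxB, hnd⟩
  -- ND is finite
  have hNDfin : ND.Finite := by
    have hsub : ND ⊆ ⋃ c ∈ {c : G | c ∈ cayleyBall S (r+1) ∧ ¬ Deep S (cayleyBall S r) c},
        {y | AW S (cayleyBall S r) c y} := by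
      rintro z ⟨hzB, hzd⟩
      obtain ⟨c, w, hcw, hcB, hwB, hAW, hcball⟩ := exists_boundary hgen hzB
      have hcnd : ¬ Deep S (cayleyBall S r) c := fun hcd => hzd ((Deep.congr hAW).2 hcd)
      exact Set.mem_biUnion ⟨hcball, hcnd⟩ hAW.symm
    refine Set.Finite.subset (Set.Finite.biUnion ?_ ?_) hsub
    · exact (ball_finite hS hgen (r+1)).subset (fun c hc' => hc'.1)
    · rintro c ⟨_, hcnd⟩
      exact Set.not_infinite.1 hcnd
  obtain ⟨m, hmND, hmax'⟩ := Set.Finite.exists_maximalFor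
    (fun z => (cayleyGraph S).dist 1 z) ND hNDfin ⟨x, hxND⟩
  have hmax : ∀ z ∈ ND, (cayleyGraph S).dist 1 z ≤ (cayleyGraph S).dist 1 m := by
    intro z hz
    rcases le_or_gt ((cayleyGraph S).dist 1 z) ((cayleyGraph S).dist 1 m) with h | h
    · exact h
    · exact hmax' hz h.le
  have hM : 2 * r + 1 ≤ (cayleyGraph S).dist 1 m := le_trans hx (hmax x hxND)
  have hmnd : ¬ Deep S (cayleyBall S r) m := hmND.2
  -- deep points are far from m
  have S2 : ∀ c, Deep S (cayleyBall S r) c → c ∉ ballAt S m r := by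
    intro c hcdeep hdc
    have hdc' : (cayleyGraph S).dist m c ≤ r := hdc
    have hAW : AW S (cayleyBall S r) m c := aw_of_far hgen (by omega)
    exact hmnd ((Deep.congr hAW).2 hcdeep)
  -- a deep point exists
  obtain ⟨y₀, hy₀⟩ := (ball_finite hS hgen ((cayleyGraph S).dist 1 m)).infinite_compl.nonempty
  have hy₀far : ¬ (cayleyGraph S).dist 1 y₀ ≤ (cayleyGraph S).dist 1 m := hy₀
  have hy₀r : y₀ ∉ cayleyBall S r := by
    intro h
    have : (cayleyGraph S).dist 1 y₀ ≤ r := h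
    omega
  have hy₀deep : Deep S (cayleyBall S r) y₀ := by
    by_contra h
    exact hy₀far (hmax y₀ ⟨hy₀r, h⟩)
  -- every deep point is joined to 1 outside the ball around m
  have S3 : ∀ y, Deep S (cayleyBall S r) y → AW S (ballAt S m r) y 1 := by
    intro y hy
    obtain ⟨c, z, hcz, hcB, hzB, hAWyc, _⟩ := exists_boundary hgen hy.not_mem
    obtain ⟨p, hp⟩ := hAWyc
    have hsup : ∀ v ∈ p.support, v ∉ ballAt S m r := by
      intro v hv
      have hyv : AW S (cayleyBall S r) y v :=
        ⟨p.takeUntil v hv, fun u hu => hp u (Walk.support_takeUntil_subset _ _ hu)⟩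
      exact S2 v ((Deep.congr hyv).1 hy)
    have h1 : AW S (ballAt S m r) y c := ⟨p, hsup⟩
    have hcdeep : Deep S (cayleyBall S r) c := (Deep.congr ⟨p, hp⟩).1 hy
    have hz1 : AW S (ballAt S m r) z 1 := aw_ballAt_of_near hgen hzB hM
    exact h1.trans (AW.cons hcz (S2 c hcdeep) hz1)
  have S4 : Deep S (ballAt S m r) 1 := by
    have hsub : {v | AW S (cayleyBall S r) y₀ v} ⊆ {v | AW S (ballAt S m r) 1 v} := by
      intro v hv
      exact (S3 v ((Deep.congr hv).1 hy₀deep)).symm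
    exact Set.Infinite.mono hsub hy₀deep
  have S5 : ∀ b : G, (cayleyGraph S).dist 1 b ≤ r → Deep S (ballAt S m r) b := by
    intro b hb
    have h1 : AW S (ballAt S m r) b 1 := aw_ballAt_of_near hgen hb hM
    exact (Deep.congr h1).2 S4
  have S6 : ∀ y, Deep S (cayleyBall S r) y → Deep S (ballAt S m r) y :=
    fun y hy => (Deep.congr (S3 y hy)).2 S4
  -- translation helper
  have htr : ∀ (g h w : G), Deep S (ballAt S (g * h) r) (g * w) ↔ Deep S (ballAt S h r) w := by
    intro g h w
    rw [← image_ballAt hgen g h r]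
    exact Deep.mulLeft_iff g
  have T1 : ∀ y, Deep S (cayleyBall S r) y → Deep S (cayleyBall S r) (m⁻¹ * y) := by
    intro y hy
    have h2 : Deep S (ballAt S (m⁻¹ * m) r) (m⁻¹ * y) := (htr m⁻¹ m y).2 (S6 y hy)
    rw [inv_mul_cancel] at h2
    rw [← ballAt_one r]
    exact h2
  have T2 : ∀ b : G, (cayleyGraph S).dist 1 b ≤ r → Deep S (cayleyBall S r) (m⁻¹ * b) := by
    intro b hb
    have h2 : Deep S (ballAt S (m⁻¹ * m) r) (m⁻¹ * b) := (htr m⁻¹ m b).2 (S5 b hb)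
    rw [inv_mul_cancel] at h2
    rw [← ballAt_one r]
    exact h2
  -- iterated translation
  have U : ∀ i : ℕ, ∀ y, Deep S (cayleyBall S r) y → Deep S (ballAt S (m ^ (i+1)) r) y := by
    intro i
    induction i with
    | zero =>
      intro y hy
      simpa [pow_one] using S6 y hy
    | succ k ih =>
      intro y hy
      have h1 := ih (m⁻¹ * y) (T1 y hy)
      have h2 := (htr m (m ^ (k+1)) (m⁻¹ * y)).2 h1
      rw [← pow_succ'] at h2
      simpa using h2
  have U' : ∀ (i : ℕ) (b : G), (cayleyGraph S).dist 1 b ≤ r →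
      Deep S (ballAt S (m ^ (i+1)) r) b := by
    intro i b hb
    cases i with
    | zero => simpa [pow_one] using S5 b hb
    | succ k =>
      have h1 := U k (m⁻¹ * b) (T2 b hb)
      have h2 := (htr m (m ^ (k+1)) (m⁻¹ * b)).2 h1
      rw [← pow_succ'] at h2
      simpa using h2
  have hself : ∀ i : ℕ, m ^ (i+1) ∈ ballAt S (m ^ (i+1)) r := by
    intro i
    show (cayleyGraph S).dist (m ^ (i+1)) (m ^ (i+1)) ≤ r
    rw [SimpleGraph.dist_self]
    omega
  have key : ∀ i : ℕ, m ^ (i+1) ∈ ND := by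
    intro i
    constructor
    · intro hmem
      have hb : (cayleyGraph S).dist 1 (m ^ (i+1)) ≤ r := hmem
      exact (U' i (m ^ (i+1)) hb).not_mem (hself i)
    · intro hdeep
      exact (U i (m ^ (i+1)) hdeep).not_mem (hself i)
  have hpow_ne : ∀ k : ℕ, 1 ≤ k → m ^ k ≠ 1 := by
    intro k hk h1
    obtain ⟨i, rfl⟩ : ∃ i, k = i + 1 := ⟨k - 1, by omega⟩
    apply (key i).1
    rw [h1]
    show (cayleyGraph S).dist 1 1 ≤ r
    rw [SimpleGraph.dist_self]
    omega
  have hstep : ∀ {i j : ℕ}, i < j → m ^ (i+1) = m ^ (j+1) → False := by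
    intro i j hlt heq
    have h2 : m ^ (i + 1) * m ^ (j - i) = m ^ (j + 1) := by
      rw [← pow_add]
      congr 1
      omega
    rw [← heq] at h2
    have h3 : m ^ (j - i) = 1 :=
      mul_left_cancel (a := m ^ (i+1)) (by rw [h2, mul_one])
    exact hpow_ne _ (by omega) h3
  have hinj : Function.Injective (fun i : ℕ => m ^ (i+1)) := by
    intro i j hij
    simp only at hij
    by_contra hne
    rcases Nat.lt_or_ge i j with h | h
    · exact hstep h hij
    · exact hstep (by omega : j < i) hij.symm
  have hrange : Set.range (fun i : ℕ => m ^ (i+1)) ⊆ cayleyBall S ((cayleyGraph S).dist 1 m) := by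
    rintro _ ⟨i, rfl⟩
    exact hmax _ (key i)
  exact Set.infinite_range_of_injective hinj
    (Set.Finite.subset (ball_finite hS hgen _) hrange)

end EndDepthAux

namespace EndDepthAux

open SimpleGraph

variable {G : Type*} [Group G] {S : Set G}

lemma main_join (hS : S.Finite) (hgen : Subgroup.closure S = ⊤) (hone : numEnds S = 1)
    {r : ℕ} (hr : 1 ≤ r) {x y : G}
    (hx : x ∉ cayleyBall S (4 * r)) (hy : y ∉ cayleyBall S (4 * r)) :
    JoinedOutside S r x y := by
  have hx' : 2 * r + 1 ≤ (cayleyGraph S).dist 1 x := by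
    have : ¬ (cayleyGraph S).dist 1 x ≤ 4 * r := hx
    omega
  have hy' : 2 * r + 1 ≤ (cayleyGraph S).dist 1 y := by
    have : ¬ (cayleyGraph S).dist 1 y ≤ 4 * r := hy
    omega
  have dx := deep_of_far hS hgen hone hr hx'
  have dy := deep_of_far hS hgen hone hr hy'
  exact one_end_join hone (ball_finite hS hgen r) dx dy

lemma endDepth_ge (hS : S.Finite) (hgen : Subgroup.closure S = ⊤) (hone : numEnds S = 1)
    {r : ℕ} (hr : 1 ≤ r) : r ≤ endDepth S r := by
  have hinf : Infinite G := infinite_of_numEnds_one hone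
  have hne : {k : ℕ | ∀ x y : G, x ∉ cayleyBall S k → y ∉ cayleyBall S k →
      JoinedOutside S r x y}.Nonempty :=
    ⟨4 * r, fun x y hx hy => main_join hS hgen hone hr hx hy⟩
  have hmem := Nat.sInf_mem hne
  by_contra h
  push_neg at h
  obtain ⟨z, hz⟩ := exists_dist_eq hS hgen (endDepth S r + 1)
  have hz1 : z ∉ cayleyBall S (endDepth S r) := by
    intro hmem'
    have : (cayleyGraph S).dist 1 z ≤ endDepth S r := hmem'
    omega
  obtain ⟨p, hp⟩ := hmem z z hz1 hz1
  exact hp z p.start_mem_support (show (cayleyGraph S).dist 1 z ≤ r by omega)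

end EndDepthAux

open EndDepthAux

/-- The end depth of a finitely generated one ended group is linear: `V₀(r) ≤ 4r` for all
integers `r ≥ 2`, and consequently `V₀` has linear growth. -/
theorem endDepth_linear {G : Type*} [Group G] (S : Set G) (hS : S.Finite)
    (hgen : Subgroup.closure S = ⊤) (hone : numEnds S = 1) :
    (∀ r : ℕ, 2 ≤ r → endDepth S r ≤ 4 * r) ∧
    GrowthLE (endDepth S) (fun x => x) ∧ GrowthLE (fun x => x) (endDepth S) := by
  have hup : ∀ r : ℕ, 1 ≤ r → endDepth S r ≤ 4 * r := by
    intro r hr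
    exact Nat.sInf_le (fun x y hx hy => main_join hS hgen hone hr hx hy)
  refine ⟨fun r hr => hup r (by omega), ?_, ?_⟩
  · refine ⟨4, 1, 8, by norm_num, by norm_num, ?_⟩
    intro x
    simp only [one_mul]
    rcases Nat.eq_zero_or_pos x with rfl | hx
    · have h8 : endDepth S 0 ≤ 8 := by
        apply Nat.sInf_le
        intro u v hu hv
        have hu' : u ∉ cayleyBall S (4 * 2) := by
          have h42 : (4 * 2 : ℕ) = 8 := by norm_num
          rw [h42]; exact hu
        have hv' : v ∉ cayleyBall S (4 * 2) := by
          have h42 : (4 * 2 : ℕ) = 8 := by norm_num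
          rw [h42]; exact hv
        have hj : JoinedOutside S 2 u v := main_join hS hgen hone (by norm_num) hu' hv'
        rw [joinedOutside_iff] at hj ⊢
        refine AW.mono ?_ hj
        intro w hw
        have : (cayleyGraph S).dist 1 w ≤ 0 := hw
        show (cayleyGraph S).dist 1 w ≤ 2
        omega
      omega
    · have := hup x hx
      omega
  · refine ⟨1, 2, 1, one_pos, by norm_num, ?_⟩
    intro x
    rcases Nat.eq_zero_or_pos x with rfl | hx
    · show (0:ℕ) ≤ 1 * endDepth S (2*0) + 1
      omega
    · have hge := endDepth_ge hS hgen hone (r := 2 * x) (by omega)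
      simp only [one_mul]
      omega
end

section
/- Let G be a finitely generated group with finite generating set S and Cayley graph X = Γ(G,S). Suppose there exist a positive integer n and a sequence of positive integers (r_i)_{i≥1} such that for every i there is a compact subset K_i of X with: (1) diam(K_i) < n; (2) N(K_i, r_i)∖K_i has at least two connected components A_i and B_i; and (3) r_i → ∞, diam(A_i) → ∞ and diam(B_i) → ∞ as i → ∞. Then e(G) > 1. -/
/-- The diameter (in `ℕ∞`) of a subset of the Cayley graph with respect to
the word (graph) metric. -/
noncomputable def graphDiam {G : Type*} [Group G] (S : Set G) (A : Set G) : ℕ∞ :=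
  ⨆ (x ∈ A) (y ∈ A), ((cayleyGraph S).dist x y : ℕ∞)

/-- The open `r`-neighbourhood `N(A, r) = {y | d(y, A) < r}` of a set `A`
in the word metric. -/
def graphNbhd {G : Type*} [Group G] (S : Set G) (A : Set G) (r : ℕ) : Set G :=
  {y : G | ∃ a ∈ A, (cayleyGraph S).dist y a < r}

/-- `A` is (the vertex set of) a connected component of the subgraph of `H`
induced on the set `W`. -/
def IsCompOf {G : Type*} (H : SimpleGraph G) (W : Set G) (A : Set G) : Prop :=
  ∃ C : (H.induce W).ConnectedComponent, A = Subtype.val '' C.supp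

section basics
open SimpleGraph
variable {G : Type*} [Group G] {S : Set G}

lemma cg_adj {x y : G} : (cayleyGraph S).Adj x y ↔ x ≠ y ∧ (x⁻¹ * y ∈ S ∨ y⁻¹ * x ∈ S) :=
  Iff.rfl

lemma cg_adj_mul (g : G) {x y : G} :
    (cayleyGraph S).Adj (g * x) (g * y) ↔ (cayleyGraph S).Adj x y := by
  have h1 : (g * x)⁻¹ * (g * y) = x⁻¹ * y := by group
  have h2 : (g * y)⁻¹ * (g * x) = y⁻¹ * x := by group
  rw [cg_adj, cg_adj, h1, h2, mul_ne_mul_right g]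

/-- Left multiplication as a graph automorphism of the Cayley graph. -/
def mulIso (g : G) : cayleyGraph S ≃g cayleyGraph S :=
  { Equiv.mulLeft g with map_rel_iff' := fun {x y} => cg_adj_mul g }

lemma mulIso_apply (g x : G) : (mulIso (S := S) g) x = g * x := rfl

lemma cg_reachable_one (hgen : Subgroup.closure S = ⊤) (g : G) :
    (cayleyGraph S).Reachable 1 g := by
  have hg : g ∈ Subgroup.closure S := by rw [hgen]; trivial
  induction hg using Subgroup.closure_induction with
  | mem s hs =>
      by_cases h : s = 1
      · subst h; exact Reachable.refl 1
      · exact (Adj.reachable (by exact ⟨fun h' => h h'.symm, Or.inl (by simpa using hs)⟩))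
  | one => exact Reachable.refl 1
  | mul a b _ _ ha hb =>
      refine ha.trans ?_
      have := hb.map (mulIso (S := S) a).toHom
      simpa [mulIso_apply] using this
  | inv a _ ha =>
      have := ha.map (mulIso (S := S) a⁻¹).toHom
      simpa [mulIso_apply] using this.symm

lemma cg_connected (hgen : Subgroup.closure S = ⊤) : (cayleyGraph S).Connected := by
  have : Nonempty G := ⟨1⟩
  exact ⟨fun x y => ((cg_reachable_one hgen x).symm.trans (cg_reachable_one hgen y))⟩

lemma cg_dist_mul (hgen : Subgroup.closure S = ⊤) (g x y : G) :
    (cayleyGraph S).dist (g * x) (g * y) = (cayleyGraph S).dist x y := by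
  have key : ∀ (c a b : G),
      (cayleyGraph S).dist (c * a) (c * b) ≤ (cayleyGraph S).dist a b := by
    intro c a b
    obtain ⟨p, hp⟩ := ((cg_connected hgen).preconnected a b).exists_walk_length_eq_dist
    calc (cayleyGraph S).dist (c * a) (c * b) ≤ (p.map (mulIso (S := S) c).toHom).length :=
          SimpleGraph.dist_le _
      _ = (cayleyGraph S).dist a b := by rw [SimpleGraph.Walk.length_map, hp]
  refine le_antisymm (key g x y) ?_
  have := key g⁻¹ (g * x) (g * y)
  simpa using this

end basics

section conn
open SimpleGraph
variable {V : Type*} {H : SimpleGraph V}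

/-- Connectedness within a vertex set `W`, via a walk whose support lies in `W`. -/
def ConnIn (H : SimpleGraph V) (W : Set V) (x y : V) : Prop :=
  ∃ p : H.Walk x y, ∀ z ∈ p.support, z ∈ W

lemma ConnIn.mono {W W' : Set V} (h : W ⊆ W') {x y : V} (hc : ConnIn H W x y) :
    ConnIn H W' x y := by
  obtain ⟨p, hp⟩ := hc
  exact ⟨p, fun z hz => h (hp z hz)⟩

lemma ConnIn.mem_left {W : Set V} {x y : V} (hc : ConnIn H W x y) : x ∈ W := by
  obtain ⟨p, hp⟩ := hc
  exact hp x p.start_mem_support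

lemma ConnIn.mem_right {W : Set V} {x y : V} (hc : ConnIn H W x y) : y ∈ W := by
  obtain ⟨p, hp⟩ := hc
  exact hp y p.end_mem_support

lemma induce_reachable_of_connIn {W : Set V} :
    ∀ {x y : V} (hc : ConnIn H W x y),
      (H.induce W).Reachable ⟨x, hc.mem_left⟩ ⟨y, hc.mem_right⟩ := by
  intro x y hc
  obtain ⟨p, hp⟩ := hc
  induction p with
  | nil => exact Reachable.refl _
  | @cons a b c hab q ih =>
      have hbW : b ∈ W := hp b (by simp)
      have hq : ∀ z ∈ q.support, z ∈ W := fun z hz => hp z (by simp [hz])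
      have h1 : (H.induce W).Adj ⟨a, hp a (by simp)⟩ ⟨b, hbW⟩ := hab
      have h2 := ih hq
      exact (h1.reachable).trans (by exact h2)

lemma connIn_of_induce_reachable {W : Set V} {x y : V} {hx : x ∈ W} {hy : y ∈ W}
    (h : (H.induce W).Reachable ⟨x, hx⟩ ⟨y, hy⟩) : ConnIn H W x y := by
  obtain ⟨q⟩ := h
  refine ⟨(q.map (SimpleGraph.Embedding.induce W).toHom :), ?_⟩
  intro z hz
  have hz : z ∈ (q.map (SimpleGraph.Embedding.induce W).toHom).support := hz
  rw [SimpleGraph.Walk.support_map, List.mem_map] at hz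
  obtain ⟨⟨z', hz'⟩, _, rfl⟩ := hz
  exact hz'

/-- Membership in the vertex set of a connected component of an induced subgraph,
in terms of `ConnIn`. -/
lemma IsCompOf.mem_iff {G₀ : Type*} {H : SimpleGraph G₀} {W A : Set G₀}
    (hA : IsCompOf H W A) {x y : G₀} (hxA : x ∈ A) (hy : y ∈ W) :
    y ∈ A ↔ ConnIn H W x y := by
  obtain ⟨C, rfl⟩ := hA
  obtain ⟨hxW, hxC⟩ : ∃ h : x ∈ W, (⟨x, h⟩ : W) ∈ C.supp := by
    obtain ⟨⟨x', hx'⟩, hmem, he⟩ := hxA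
    exact he ▸ ⟨hx', hmem⟩
  constructor
  · rintro ⟨⟨y', hy'⟩, hmem, rfl⟩
    rw [SimpleGraph.ConnectedComponent.mem_supp_iff] at hmem hxC
    have : (H.induce W).Reachable ⟨x, hxW⟩ ⟨y', hy'⟩ := by
      rw [← SimpleGraph.ConnectedComponent.eq] at *
      rw [hxC, hmem]
    exact connIn_of_induce_reachable this
  · intro hc
    have := induce_reachable_of_connIn hc
    refine ⟨⟨y, hy⟩, ?_, rfl⟩
    rw [SimpleGraph.ConnectedComponent.mem_supp_iff] at hxC ⊢
    rw [← hxC]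
    exact (SimpleGraph.ConnectedComponent.eq.mpr (by exact this.symm))

lemma IsCompOf.subset {G₀ : Type*} {H : SimpleGraph G₀} {W A : Set G₀}
    (hA : IsCompOf H W A) : A ⊆ W := by
  obtain ⟨C, rfl⟩ := hA
  rintro x ⟨⟨x', hx'⟩, _, rfl⟩
  exact hx'

lemma IsCompOf.nonempty {G₀ : Type*} {H : SimpleGraph G₀} {W A : Set G₀}
    (hA : IsCompOf H W A) : A.Nonempty := by
  obtain ⟨C, rfl⟩ := hA
  obtain ⟨v, hv⟩ := C.exists_rep
  exact ⟨v.val, v, by rw [SimpleGraph.ConnectedComponent.mem_supp_iff]; exact hv, rfl⟩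

lemma IsCompOf.eq_of_connIn {G₀ : Type*} {H : SimpleGraph G₀} {W A B : Set G₀}
    (hA : IsCompOf H W A) (hB : IsCompOf H W B) {x y : G₀} (hx : x ∈ A) (hy : y ∈ B)
    (hc : ConnIn H W x y) : A = B := by
  have hyA : y ∈ A := (hA.mem_iff hx hc.mem_right).mpr hc
  obtain ⟨C, rfl⟩ := hA
  obtain ⟨D, rfl⟩ := hB
  obtain ⟨⟨y₁, hy₁⟩, hmem₁, he₁⟩ := hyA
  obtain ⟨⟨y₂, hy₂⟩, hmem₂, he₂⟩ := hy
  have : y₁ = y₂ := he₁.trans he₂.symm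
  subst this
  rw [SimpleGraph.ConnectedComponent.mem_supp_iff] at hmem₁ hmem₂
  rw [← hmem₁, ← hmem₂]

end conn

section boundary
open SimpleGraph
variable {V : Type*} {H : SimpleGraph V}

/-- Walking from outside `K` into `K`, staying in `N`, we find a vertex of `N \ K`
adjacent to `K` and connected to the start within `N \ K`. -/
lemma walk_first_hit {K N : Set V} :
    ∀ {x y : V} (p : H.Walk x y), x ∈ N → x ∉ K → y ∈ K →
      (∀ z ∈ p.support, z ∈ N) →
      ∃ u k, k ∈ K ∧ H.Adj u k ∧ ConnIn H (N \ K) x u := by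
  intro x y p
  induction p with
  | nil => intro _ hxK hyK _; exact absurd hyK hxK
  | @cons a b c hab q ih =>
      intro hxN hxK hyK hsupp
      by_cases hbK : b ∈ K
      · exact ⟨a, b, hbK, hab, SimpleGraph.Walk.nil, by
          intro z hz; simp at hz; subst hz; exact ⟨hxN, hxK⟩⟩
      · have hbN : b ∈ N := hsupp b (by simp)
        have hq : ∀ z ∈ q.support, z ∈ N := fun z hz => hsupp z (by simp [hz])
        obtain ⟨u, k, hk, hadj, w, hw⟩ := ih hbN hbK hyK hq
        refine ⟨u, k, hk, hadj, SimpleGraph.Walk.cons hab w, ?_⟩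
        intro z hz
        rw [SimpleGraph.Walk.support_cons, List.mem_cons] at hz
        rcases hz with rfl | hz
        · exact ⟨hxN, hxK⟩
        · exact hw z hz

lemma dist_le_of_mem_support {x y z : V} (p : H.Walk x y) (hz : z ∈ p.support) :
    H.dist z y ≤ p.length := by
  classical
  exact le_trans (SimpleGraph.dist_le (p.dropUntil z hz))
    (SimpleGraph.Walk.length_dropUntil_le p hz)

end boundary

section adjb
open SimpleGraph
variable {G : Type*} [Group G] {S : Set G}

/-- Every component of the annulus `N(K,r) \ K` contains a vertex adjacent to `K`. -/
lemma exists_adj_boundary (hgen : Subgroup.closure S = ⊤) {K A : Set G} {r : ℕ}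
    (hA : IsCompOf (cayleyGraph S) (graphNbhd S K r \ K) A) :
    ∃ u k, u ∈ A ∧ k ∈ K ∧ (cayleyGraph S).Adj u k := by
  obtain ⟨a, haA⟩ := hA.nonempty
  have haW : a ∈ graphNbhd S K r \ K := hA.subset haA
  obtain ⟨⟨ka, hka, hdist⟩, haK⟩ := haW
  obtain ⟨p, hp⟩ := ((cg_connected hgen).preconnected a ka).exists_walk_length_eq_dist
  have hsupp : ∀ z ∈ p.support, z ∈ graphNbhd S K r := by
    intro z hz
    refine ⟨ka, hka, lt_of_le_of_lt ?_ hdist⟩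
    calc (cayleyGraph S).dist z ka ≤ p.length := dist_le_of_mem_support p hz
      _ = (cayleyGraph S).dist a ka := hp
  obtain ⟨u, k, hk, hadj, hconn⟩ :=
    walk_first_hit p (show a ∈ graphNbhd S K r from ⟨ka, hka, hdist⟩) haK hka hsupp
  refine ⟨u, k, ?_, hk, hadj⟩
  exact (hA.mem_iff haA hconn.mem_right).mpr hconn

end adjb

section translate
open SimpleGraph
variable {G : Type*} [Group G] {S : Set G}

lemma nbhd_image (hgen : Subgroup.closure S = ⊤) (g : G) (K : Set G) (r : ℕ) :
    graphNbhd S ((g * ·) '' K) r = (g * ·) '' graphNbhd S K r := by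
  ext y
  constructor
  · rintro ⟨a, ⟨a', ha', rfl⟩, hd⟩
    refine ⟨g⁻¹ * y, ⟨a', ha', ?_⟩, by simp⟩
    have h2 : (cayleyGraph S).dist (g⁻¹ * y) a' = (cayleyGraph S).dist y (g * a') := by
      conv_rhs => rw [show y = g * (g⁻¹ * y) by group]
      exact (cg_dist_mul hgen g _ _).symm
    rw [h2]; exact hd
  · rintro ⟨y', ⟨a', ha', hd⟩, rfl⟩
    exact ⟨g * a', ⟨a', ha', rfl⟩, by rwa [cg_dist_mul hgen g]⟩

lemma connIn_image (g : G) {W : Set G} {x y : G} (h : ConnIn (cayleyGraph S) W x y) :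
    ConnIn (cayleyGraph S) ((g * ·) '' W) (g * x) (g * y) := by
  obtain ⟨p, hp⟩ := h
  refine ⟨(p.map (mulIso (S := S) g).toHom :), ?_⟩
  intro z hz
  have hz : z ∈ (p.map (mulIso (S := S) g).toHom).support := hz
  rw [SimpleGraph.Walk.support_map, List.mem_map] at hz
  obtain ⟨z', hz', rfl⟩ := hz
  exact ⟨z', hp z' hz', rfl⟩

lemma diam_image (hgen : Subgroup.closure S = ⊤) (g : G) (A : Set G) :
    graphDiam S ((g * ·) '' A) = graphDiam S A := by
  unfold graphDiam
  rw [iSup_image]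
  refine iSup_congr fun x => iSup_congr fun _ => ?_
  rw [iSup_image]
  refine iSup_congr fun y => iSup_congr fun _ => ?_
  rw [cg_dist_mul hgen g]

lemma dist_le_diam {T : Set G} {x y : G} (hx : x ∈ T) (hy : y ∈ T) :
    ((cayleyGraph S).dist x y : ℕ∞) ≤ graphDiam S T := by
  have h1 : ((cayleyGraph S).dist x y : ℕ∞) ≤ ⨆ y' ∈ T, ((cayleyGraph S).dist x y' : ℕ∞) :=
    le_biSup (fun y' => ((cayleyGraph S).dist x y' : ℕ∞)) hy
  have h2 : (⨆ y' ∈ T, ((cayleyGraph S).dist x y' : ℕ∞)) ≤ graphDiam S T := by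
    unfold graphDiam
    exact le_biSup (fun x' => ⨆ y' ∈ T, ((cayleyGraph S).dist x' y' : ℕ∞)) hx
  exact h1.trans h2

lemma diam_le {T : Set G} {N : ℕ∞}
    (h : ∀ x ∈ T, ∀ y ∈ T, ((cayleyGraph S).dist x y : ℕ∞) ≤ N) : graphDiam S T ≤ N := by
  unfold graphDiam
  exact iSup₂_le fun x hx => iSup₂_le fun y hy => h x hx y hy

end translate

section balls
open SimpleGraph Pointwise
variable {G : Type*} [Group G] {S : Set G}

private lemma setpow_finite {T : Set G} (hT : T.Finite) : ∀ l : ℕ, (T ^ l).Finite := by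
  intro l
  induction l with
  | zero => simpa [pow_zero] using Set.finite_one
  | succ k ih => rw [pow_succ]; exact ih.mul hT

private lemma walk_prod_mem {x y : G} (p : (cayleyGraph S).Walk x y) :
    x⁻¹ * y ∈ (S ∪ S⁻¹ ∪ {1}) ^ p.length := by
  induction p with
  | nil => simp [pow_zero]
  | @cons a b c hab q ih =>
      have hstep : a⁻¹ * b ∈ S ∪ S⁻¹ ∪ {1} := by
        rcases hab.2 with h | h
        · exact Or.inl (Or.inl h)
        · exact Or.inl (Or.inr (by simpa [Set.mem_inv] using h))
      have : a⁻¹ * c = (a⁻¹ * b) * (b⁻¹ * c) := by group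
      rw [SimpleGraph.Walk.length_cons, this, pow_succ']
      exact Set.mul_mem_mul hstep ih

lemma ball_finite (hS : S.Finite) (hgen : Subgroup.closure S = ⊤) (c : G) (m : ℕ) :
    {x : G | (cayleyGraph S).dist c x ≤ m}.Finite := by
  classical
  have hT : (S ∪ S⁻¹ ∪ {1} : Set G).Finite := (hS.union hS.inv).union (Set.finite_singleton 1)
  have hsub : {x : G | (cayleyGraph S).dist c x ≤ m} ⊆
      ⋃ l : Fin (m + 1), (c * ·) '' ((S ∪ S⁻¹ ∪ {1} : Set G) ^ (l : ℕ)) := by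
    intro x hx
    obtain ⟨p, hp⟩ := ((cg_connected hgen).preconnected c x).exists_walk_length_eq_dist
    have hlen : p.length ≤ m := by rw [hp]; exact hx
    refine Set.mem_iUnion.mpr ⟨⟨p.length, Nat.lt_succ_of_le hlen⟩, ?_⟩
    exact ⟨c⁻¹ * x, walk_prod_mem p, by group⟩
  exact Set.Finite.subset (Set.finite_iUnion fun l => ((setpow_finite hT _).image _)) hsub

end balls

section extract
open SimpleGraph
variable {G : Type*} [Group G] {S : Set G}

lemma extract_data (hgen : Subgroup.closure S = ⊤) {n : ℕ} (hn : 0 < n) {r : ℕ}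
    {K A B : Set G} (hKdiam : graphDiam S K < (n : ℕ∞))
    (hA : IsCompOf (cayleyGraph S) (graphNbhd S K r \ K) A)
    (hB : IsCompOf (cayleyGraph S) (graphNbhd S K r \ K) B) (hAB : A ≠ B) :
    ∃ (K' : Set G) (u v : G),
      (1 : G) ∈ K' ∧
      (∀ k ∈ K', (cayleyGraph S).dist 1 k ≤ n - 1) ∧
      (cayleyGraph S).dist 1 u ≤ n ∧ (cayleyGraph S).dist 1 v ≤ n ∧
      ¬ ConnIn (cayleyGraph S) (graphNbhd S K' r \ K') u v ∧
      (∃ A' : Set G, u ∈ A' ∧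
        (∀ a ∈ A', ConnIn (cayleyGraph S) (graphNbhd S K' r \ K') u a) ∧
        graphDiam S A' = graphDiam S A) ∧
      (∃ B' : Set G, v ∈ B' ∧
        (∀ b ∈ B', ConnIn (cayleyGraph S) (graphNbhd S K' r \ K') v b) ∧
        graphDiam S B' = graphDiam S B) := by
  obtain ⟨u₀, k₀, hu₀A, hk₀K, hadj₀⟩ := exists_adj_boundary hgen hA
  obtain ⟨v₀, k₁, hv₀B, hk₁K, hadj₁⟩ := exists_adj_boundary hgen hB
  set g := k₀⁻¹ with hg
  have hinj : Function.Injective (g * ·) := fun a b h => by simpa using h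
  have hW' : graphNbhd S ((g * ·) '' K) r \ (g * ·) '' K =
      (g * ·) '' (graphNbhd S K r \ K) := by
    rw [nbhd_image hgen, Set.image_diff hinj]
  have hdistK : ∀ x y, x ∈ K → y ∈ K → (cayleyGraph S).dist x y ≤ n - 1 := by
    intro x y hx hy
    have h1 : ((cayleyGraph S).dist x y : ℕ∞) < (n : ℕ∞) := lt_of_le_of_lt (dist_le_diam hx hy) hKdiam
    have h2 : (cayleyGraph S).dist x y < n := by exact_mod_cast h1
    omega
  have hd1 : ∀ w : G, (cayleyGraph S).dist 1 (g * w) = (cayleyGraph S).dist k₀ w := by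
    intro w
    conv_lhs => rw [show (1 : G) = g * k₀ by simp [hg]]
    exact cg_dist_mul hgen g k₀ w
  refine ⟨(g * ·) '' K, g * u₀, g * v₀, ⟨k₀, hk₀K, by simp [hg]⟩, ?_, ?_, ?_, ?_, ?_, ?_⟩
  · rintro k ⟨k', hk', rfl⟩
    rw [hd1]
    exact hdistK _ _ hk₀K hk'
  · rw [hd1]
    have : (cayleyGraph S).dist u₀ k₀ ≤ 1 :=
      SimpleGraph.dist_le (SimpleGraph.Walk.cons hadj₀ SimpleGraph.Walk.nil)
    rw [SimpleGraph.dist_comm] at this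
    omega
  · rw [hd1]
    have h1 : (cayleyGraph S).dist k₀ v₀ ≤
        (cayleyGraph S).dist k₀ k₁ + (cayleyGraph S).dist k₁ v₀ :=
      (cg_connected hgen).dist_triangle
    have h2 : (cayleyGraph S).dist k₀ k₁ ≤ n - 1 := hdistK _ _ hk₀K hk₁K
    have h3 : (cayleyGraph S).dist k₁ v₀ ≤ 1 := by
      have := SimpleGraph.dist_le (SimpleGraph.Walk.cons hadj₁.symm SimpleGraph.Walk.nil)
      simpa using this
    omega
  · rw [hW']
    intro hc
    have hc' := connIn_image (S := S) g⁻¹ hc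
    rw [Set.image_image] at hc'
    simp only [inv_mul_cancel_left] at hc'
    have : ConnIn (cayleyGraph S) (graphNbhd S K r \ K) u₀ v₀ := by
      simpa [Set.image_id'] using hc'
    exact hAB (hA.eq_of_connIn hB hu₀A hv₀B this)
  · refine ⟨(g * ·) '' A, ⟨u₀, hu₀A, rfl⟩, ?_, diam_image hgen g A⟩
    rintro a ⟨a', ha', rfl⟩
    rw [hW']
    exact connIn_image g ((hA.mem_iff hu₀A (hA.subset ha')).mp ha')
  · refine ⟨(g * ·) '' B, ⟨v₀, hv₀B, rfl⟩, ?_, diam_image hgen g B⟩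
    rintro b ⟨b', hb', rfl⟩
    rw [hW']
    exact connIn_image g ((hB.mem_iff hv₀B (hB.subset hb')).mp hb')

end extract

section pigeon

lemma exists_infinite_fiber' {α : Type*} (f : ℕ → α) {P : Set α} (hP : P.Finite)
    (hf : ∀ i, f i ∈ P) : ∃ a, {i | f i = a}.Infinite := by
  by_contra h
  push_neg at h
  have hsub : (Set.univ : Set ℕ) ⊆ ⋃ a ∈ P, {i | f i = a} := fun i _ =>
    Set.mem_iUnion₂.mpr ⟨f i, hf i, rfl⟩
  exact Set.infinite_univ ((hP.biUnion fun a _ => h a).subset hsub)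

end pigeon


/-- If there are a positive integer `n` and a sequence of positive integers `rᵢ → ∞`, and
compact sets `Kᵢ` with `diam Kᵢ < n` such that `N(Kᵢ, rᵢ) ∖ Kᵢ` has at least two connected
components `Aᵢ`, `Bᵢ` whose diameters tend to infinity, then `G` has more than one end. -/
theorem one_lt_ends_of_separating_sets {G : Type*} [Group G] (S : Set G) (hS : S.Finite)
    (hgen : Subgroup.closure S = ⊤) (n : ℕ) (hn : 0 < n) (r : ℕ → ℕ)
    (hrpos : ∀ i, 0 < r i) (K : ℕ → Set G) (A B : ℕ → Set G)
    (hKcpt : ∀ i, (K i).Finite)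
    (hKdiam : ∀ i, graphDiam S (K i) < (n : ℕ∞))
    (hA : ∀ i, IsCompOf (cayleyGraph S) (graphNbhd S (K i) (r i) \ K i) (A i))
    (hB : ∀ i, IsCompOf (cayleyGraph S) (graphNbhd S (K i) (r i) \ K i) (B i))
    (hAB : ∀ i, A i ≠ B i)
    (hr : Filter.Tendsto r Filter.atTop Filter.atTop)
    (hAdiam : Filter.Tendsto (fun i => graphDiam S (A i)) Filter.atTop (nhds ⊤))
    (hBdiam : Filter.Tendsto (fun i => graphDiam S (B i)) Filter.atTop (nhds ⊤)) :
    1 < numEnds S := by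
  classical
  have hconn := cg_connected hgen
  have hex := fun i => extract_data hgen hn (hKdiam i) (hA i) (hB i) (hAB i)
  choose K' u v h1K hKball huball hvball hsep hA' hB' using hex
  set ball1 : Set G := {x | (cayleyGraph S).dist 1 x ≤ n - 1} with hball1def
  set balln : Set G := {x | (cayleyGraph S).dist 1 x ≤ n} with    hballndef
  have hball1 : ball1.Finite := ball_finite hS hgen 1 (n - 1)
  have hballn : balln.Finite := ball_finite hS hgen 1 n
  have hPfin : ({T : Set G | T ⊆ ball1} ×ˢ (balln ×ˢ balln)).Finite :=
    hball1.finite_subsets.prod (hballn.prod hballn)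
  have hmem : ∀ i, ((K' i, u i, v i) : Set G × G × G) ∈
      {T : Set G | T ⊆ ball1} ×ˢ (balln ×ˢ balln) := by
    intro i
    exact ⟨fun k hk => hKball i k hk, huball i, hvball i⟩
  obtain ⟨⟨T, u₀, v₀⟩, hI⟩ := exists_infinite_fiber' _ hPfin hmem
  set I : Set ℕ := {i | (K' i, u i, v i) = (T, u₀, v₀)} with hIdef
  have hIeq : ∀ i ∈ I, K' i = T ∧ u i = u₀ ∧ v i = v₀ := by
    intro i hi
    have := hi
    simp only [hIdef, Set.mem_setOf_eq, Prod.ext_iff] at this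
    exact ⟨this.1, this.2.1, this.2.2⟩
  obtain ⟨i₀, hi₀⟩ := hI.nonempty
  obtain ⟨hKi₀, hui₀, hvi₀⟩ := hIeq i₀ hi₀
  have h1T : (1 : G) ∈ T := hKi₀ ▸ h1K i₀
  have hTfin : T.Finite := hball1.subset (hKi₀ ▸ fun k hk => hKball i₀ k hk)
  -- u₀ and v₀ are not in T
  have hmemW : ∀ i ∈ I, u₀ ∈ graphNbhd S T (r i) \ T ∧ v₀ ∈ graphNbhd S T (r i) \ T := by
    intro i hi
    obtain ⟨hKi, hui, hvi⟩ := hIeq i hi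
    obtain ⟨A', huA', hconnA', _⟩ := hA' i
    obtain ⟨B', hvB', hconnB', _⟩ := hB' i
    constructor
    · have := (hconnA' _ huA').mem_left
      rwa [hKi, hui] at this
    · have := (hconnB' _ hvB').mem_left
      rwa [hKi, hvi] at this
  have hu₀T : u₀ ∉ T := (hmemW i₀ hi₀).1.2
  have hv₀T : v₀ ∉ T := (hmemW i₀ hi₀).2.2
  have hu₀b : (cayleyGraph S).dist 1 u₀ ≤ n := hui₀ ▸ huball i₀
  have hv₀b : (cayleyGraph S).dist 1 v₀ ≤ n := hvi₀ ▸ hvball i₀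
  -- the two complementary components
  set Cu := (cayleyGraph S).componentComplMk hu₀T with hCudef
  set Cv := (cayleyGraph S).componentComplMk hv₀T with hCvdef
  -- they are distinct
  have hCuCv : Cu ≠ Cv := by
    intro h
    have hreach : ((cayleyGraph S).induce Tᶜ).Reachable ⟨u₀, hu₀T⟩ ⟨v₀, hv₀T⟩ :=
      SimpleGraph.ConnectedComponent.eq.mp h
    obtain ⟨p, hp⟩ := connIn_of_induce_reachable hreach
    obtain ⟨N, hN⟩ := Filter.eventually_atTop.mp
      (Filter.tendsto_atTop.mp hr (p.length + n + 1))
    obtain ⟨i, hiI, hNi⟩ := hI.exists_gt N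
    obtain ⟨hKi, hui, hvi⟩ := hIeq i hiI
    have hri : p.length + n + 1 ≤ r i := hN i hNi.le
    have hcon : ConnIn (cayleyGraph S) (graphNbhd S T (r i) \ T) u₀ v₀ := by
      refine ⟨p, fun z hz => ⟨⟨1, h1T, ?_⟩, hp z hz⟩⟩
      have h1 : (cayleyGraph S).dist z v₀ ≤ p.length := dist_le_of_mem_support p hz
      have h2 : (cayleyGraph S).dist z 1 ≤
          (cayleyGraph S).dist z v₀ + (cayleyGraph S).dist v₀ 1 := hconn.dist_triangle
      have h3 : (cayleyGraph S).dist v₀ 1 ≤ n := by rwa [SimpleGraph.dist_comm] at hv₀b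
      omega
    have := hsep i
    rw [hKi, hui, hvi] at this
    exact this hcon
  -- supports of both components are infinite
  have key : ∀ (w₀ : G) (hw₀ : w₀ ∉ T) (D : ℕ → Set G),
      Filter.Tendsto (fun i => graphDiam S (D i)) Filter.atTop (nhds ⊤) →
      (∀ i ∈ I, ∃ A' : Set G, w₀ ∈ A' ∧
        (∀ a ∈ A', ConnIn (cayleyGraph S) (graphNbhd S T (r i) \ T) w₀ a) ∧
        graphDiam S A' = graphDiam S (D i)) →
      ((cayleyGraph S).componentComplMk hw₀).supp.Infinite := by
    intro w₀ hw₀ D hDdiam hDcomp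
    by_contra hfin
    rw [Set.not_infinite] at hfin
    set F₀ : Set G := ((cayleyGraph S).componentComplMk hw₀).supp with hF₀def
    set t : Finset G := hfin.toFinset with htdef
    set N₀ : ℕ := t.sup fun x => t.sup fun y => (cayleyGraph S).dist x y with hN₀def
    have hbound : ∀ x ∈ F₀, ∀ y ∈ F₀, (cayleyGraph S).dist x y ≤ N₀ := by
      intro x hx y hy
      have hxt : x ∈ t := by simp [htdef, Set.Finite.mem_toFinset, hx]
      have hyt : y ∈ t := by simp [htdef, Set.Finite.mem_toFinset, hy]
      calc (cayleyGraph S).dist x y ≤ t.sup fun y => (cayleyGraph S).dist x y :=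
            Finset.le_sup hyt
        _ ≤ N₀ := Finset.le_sup (f := fun x => t.sup fun y => (cayleyGraph S).dist x y) hxt
    have hev : ∀ᶠ i in Filter.atTop, graphDiam S (D i) ∈ Set.Ioi (N₀ : ℕ∞) :=
      hDdiam (Ioi_mem_nhds (by simp : (N₀ : ℕ∞) < ⊤))
    obtain ⟨M, hM⟩ := Filter.eventually_atTop.mp hev
    obtain ⟨i, hiI, hMi⟩ := hI.exists_gt M
    obtain ⟨A', hwA', hconnA', hdiamA'⟩ := hDcomp i hiI
    have hsub : A' ⊆ F₀ := by
      intro a haA'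
      have hc : ConnIn (cayleyGraph S) Tᶜ w₀ a :=
        (hconnA' a haA').mono fun z hz => hz.2
      have haT : a ∉ T := hc.mem_right
      have hreach := induce_reachable_of_connIn hc
      exact ⟨haT, SimpleGraph.ConnectedComponent.eq.mpr (by exact hreach.symm)⟩
    have hle : graphDiam S A' ≤ (N₀ : ℕ∞) := by
      refine diam_le fun x hx y hy => ?_
      exact_mod_cast Nat.cast_le.mpr (hbound x (hsub hx) y (hsub hy))
    have hgt : (N₀ : ℕ∞) < graphDiam S (D i) := hM i hMi.le
    rw [hdiamA'] at hle
    exact absurd hle (not_le.mpr hgt)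
  have hCuInf : Cu.supp.Infinite := by
    refine key u₀ hu₀T A hAdiam fun i hi => ?_
    obtain ⟨hKi, hui, hvi⟩ := hIeq i hi
    obtain ⟨A', huA', hconnA', hdiamA'⟩ := hA' i
    exact ⟨A', hui ▸ huA', by rw [← hKi, ← hui]; exact hconnA', hdiamA'⟩
  have hCvInf : Cv.supp.Infinite := by
    refine key v₀ hv₀T B hBdiam fun i hi => ?_
    obtain ⟨hKi, hui, hvi⟩ := hIeq i hi
    obtain ⟨B', hvB', hconnB', hdiamB'⟩ := hB' i
    exact ⟨B', hvi ▸ hvB', by rw [← hKi, ← hvi]; exact hconnB', hdiamB'⟩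
  -- conclude
  have hnontriv :
      Nontrivial {C : (cayleyGraph S).ComponentCompl T // C.supp.Infinite} :=
    ⟨⟨⟨Cu, hCuInf⟩, ⟨Cv, hCvInf⟩, fun h => hCuCv (congrArg Subtype.val h)⟩⟩
  have hcard : 1 < ENat.card {C : (cayleyGraph S).ComponentCompl T // C.supp.Infinite} :=
    (ENat.one_lt_card_iff_nontrivial _).mpr hnontriv
  refine lt_of_lt_of_le hcard ?_
  unfold numEnds
  exact le_iSup_of_le T (le_iSup_of_le hTfin le_rfl)
end

section
/- Let G be a finitely generated group with finite generating set S and Cayley graph X = Γ(G,S). If there exists a sequence of positive integers (r_i)_{i≥1} with r_i → ∞ such that the number of vertices |S(r_i)| of the sphere of radius r_i converges to a finite limit as i → ∞, then G is virtually cyclic, i.e. G has a cyclic subgroup of finite index. -/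
/-- The sphere of radius `r` centered at the identity in the Cayley graph,
with respect to the word (graph) metric. -/
def cayleySphere {G : Type*} [Group G] (S : Set G) (r : ℕ) : Set G :=
  {x : G | (cayleyGraph S).dist 1 x = r}

namespace VC

open SimpleGraph Set

variable {G : Type*} [Group G] {S : Set G}

/-- word norm -/
noncomputable def nrm (S : Set G) (x : G) : ℕ := (cayleyGraph S).dist 1 x

/-- ball -/
def ball (S : Set G) (n : ℕ) : Set G := {x : G | nrm S x ≤ n}

lemma adj_iff {x y : G} : (cayleyGraph S).Adj x y ↔ x ≠ y ∧ (x⁻¹ * y ∈ S ∨ y⁻¹ * x ∈ S) :=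
  Iff.rfl

/-- left multiplication graph isomorphism -/
def leftMul (S : Set G) (g : G) : cayleyGraph S ≃g cayleyGraph S where
  toEquiv := Equiv.mulLeft g
  map_rel_iff' := by
    intro a b
    simp only [Equiv.coe_mulLeft, adj_iff]
    constructor
    · rintro ⟨h1, h2⟩
      refine ⟨fun h => h1 (by rw [h]), ?_⟩
      · simpa [mul_assoc] using h2
    · rintro ⟨h1, h2⟩
      refine ⟨fun h => h1 (mul_left_cancel h), ?_⟩
      · simpa [mul_assoc] using h2

lemma reachable_one (hgen : Subgroup.closure S = ⊤) (x : G) :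
    (cayleyGraph S).Reachable 1 x := by
  have hx : x ∈ Subgroup.closure S := by rw [hgen]; trivial
  induction hx using Subgroup.closure_induction with
  | mem s hs =>
    by_cases h1 : (1 : G) = s
    · rw [← h1]
    · exact (Adj.reachable (by exact ⟨h1, Or.inl (by simpa using hs)⟩))
  | one => rfl
  | mul a b _ _ ha hb =>
    refine ha.trans ?_
    obtain ⟨w⟩ := hb
    exact ⟨(w.map (leftMul S a).toHom).copy (by simp [leftMul]) rfl⟩
  | inv a _ ha =>
    obtain ⟨w⟩ := ha
    have := w.map (leftMul S a⁻¹).toHom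
    exact ⟨(this.copy (by simp [leftMul]) (by simp [leftMul])).reverse⟩

lemma connected (hgen : Subgroup.closure S = ⊤) : (cayleyGraph S).Connected := by
  rw [connected_iff_exists_forall_reachable]
  exact ⟨1, reachable_one hgen⟩

lemma dist_mulLeft (S : Set G) (g a b : G) :
    (cayleyGraph S).dist (g * a) (g * b) = (cayleyGraph S).dist a b := by
  have key : ∀ (h c d : G), (cayleyGraph S).dist (h * c) (h * d) ≤ (cayleyGraph S).dist c d := by
    intro h c d
    rcases eq_or_ne ((cayleyGraph S).dist c d) 0 with h0 | h0
    · rcases SimpleGraph.dist_eq_zero_iff_eq_or_not_reachable.mp h0 with rfl | hnr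
      · simp [SimpleGraph.dist_self]
      · rw [h0, SimpleGraph.dist_eq_zero_of_not_reachable]
        intro ⟨w⟩
        exact hnr ⟨((w.map (leftMul S h⁻¹).toHom).copy (by simp [leftMul]) (by simp [leftMul]))⟩
    · obtain ⟨p, hp⟩ := SimpleGraph.exists_walk_of_dist_ne_zero h0
      calc (cayleyGraph S).dist (h * c) (h * d)
          ≤ ((p.map (leftMul S h).toHom).copy rfl rfl).length := SimpleGraph.dist_le _
        _ = p.length := by simp
        _ = _ := hp
  refine le_antisymm (key g a b) ?_
  have := key g⁻¹ (g * a) (g * b)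
  simpa using this

lemma dist_eq_nrm (S : Set G) (x y : G) :
    (cayleyGraph S).dist x y = nrm S (x⁻¹ * y) := by
  have := dist_mulLeft S x⁻¹ x y
  simpa [nrm] using this.symm

lemma nrm_one : nrm S (1 : G) = 0 := by simp [nrm, SimpleGraph.dist_self]

lemma nrm_eq_zero (hgen : Subgroup.closure S = ⊤) {x : G} : nrm S x = 0 ↔ x = 1 := by
  rw [nrm, (reachable_one hgen x).dist_eq_zero_iff]
  exact eq_comm

lemma nrm_inv (S : Set G) (x : G) : nrm S x⁻¹ = nrm S x := by
  conv_rhs => rw [nrm, SimpleGraph.dist_comm, dist_eq_nrm]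
  simp

lemma dist_triangle (hgen : Subgroup.closure S = ⊤) (x y z : G) :
    (cayleyGraph S).dist x z ≤ (cayleyGraph S).dist x y + (cayleyGraph S).dist y z :=
  (connected hgen).dist_triangle

lemma nrm_mul_le (hgen : Subgroup.closure S = ⊤) (x y : G) :
    nrm S (x * y) ≤ nrm S x + nrm S y := by
  have h := dist_triangle hgen 1 x (x * y)
  rw [dist_eq_nrm S x (x * y)] at h
  simpa [nrm] using h

lemma adj_nrm_le {x y : G} (hgen : Subgroup.closure S = ⊤) (h : (cayleyGraph S).Adj x y) :
    nrm S y ≤ nrm S x + 1 := by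
  have := dist_triangle hgen 1 x y
  simpa [nrm, SimpleGraph.dist_eq_one_iff_adj.mpr h] using this

lemma exists_geodesic (hgen : Subgroup.closure S = ⊤) (x : G) :
    ∃ w : (cayleyGraph S).Walk 1 x, w.length = nrm S x :=
  (reachable_one hgen x).exists_walk_length_eq_dist

/-- distance to getVert along any walk -/
lemma dist_getVert_le {x y : G} (w : (cayleyGraph S).Walk x y) (i : ℕ) :
    (cayleyGraph S).dist x (w.getVert i) ≤ i := by
  classical
  induction w generalizing i with
  | nil => simp [SimpleGraph.Walk.getVert, SimpleGraph.dist_self]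
  | @cons a b c h p ih =>
    cases i with
    | zero => simp [SimpleGraph.Walk.getVert, SimpleGraph.dist_self]
    | succ n =>
      have h1 : (cayleyGraph S).dist a b = 1 := SimpleGraph.dist_eq_one_iff_adj.mpr h
      calc (cayleyGraph S).dist a ((SimpleGraph.Walk.cons h p).getVert (n+1))
          ≤ (cayleyGraph S).dist a b + (cayleyGraph S).dist b (p.getVert n) := by
            have hr1 : (cayleyGraph S).Reachable a b := h.reachable
            have hr2 : (cayleyGraph S).Reachable b (p.getVert n) := by
              rcases le_or_gt n p.length with hl | hl
              · exact SimpleGraph.Walk.reachable (p.takeUntil _ (SimpleGraph.Walk.mem_support_iff_exists_getVert.mpr ⟨n, rfl, hl⟩))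
              · rw [p.getVert_of_length_le (le_of_lt hl)]
                exact p.reachable
            -- use edist triangle instead, to avoid connectivity
            have := SimpleGraph.edist_triangle (G := cayleyGraph S) (u := a) (v := b) (w := p.getVert n)
            have hab : (cayleyGraph S).edist a b ≠ ⊤ := SimpleGraph.edist_ne_top_iff_reachable.mpr hr1
            have hbp : (cayleyGraph S).edist b (p.getVert n) ≠ ⊤ := SimpleGraph.edist_ne_top_iff_reachable.mpr hr2
            rw [SimpleGraph.dist, SimpleGraph.dist, SimpleGraph.dist]
            calc ((cayleyGraph S).edist a (p.getVert n)).toNat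
                ≤ ((cayleyGraph S).edist a b + (cayleyGraph S).edist b (p.getVert n)).toNat := by
                  apply ENat.toNat_le_toNat this
                  exact WithTop.add_ne_top.mpr ⟨hab, hbp⟩
              _ = _ := ENat.toNat_add hab hbp
        _ ≤ 1 + n := by
            rw [h1]
            exact Nat.add_le_add_left (ih n) 1
        _ = n + 1 := Nat.add_comm 1 n

lemma dist_getVert_to_end_le {x y : G} (w : (cayleyGraph S).Walk x y) (i : ℕ) :
    (cayleyGraph S).dist (w.getVert i) y ≤ w.length - i := by
  have := dist_getVert_le (S := S) w.reverse (w.length - i)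
  rw [SimpleGraph.Walk.getVert_reverse] at this
  rcases le_or_gt i w.length with hl | hl
  · rw [Nat.sub_sub_self hl] at this
    rwa [SimpleGraph.dist_comm]
  · rw [w.getVert_of_length_le (le_of_lt hl)]
    simp [SimpleGraph.dist_self]

lemma nrm_getVert_geodesic (hgen : Subgroup.closure S = ⊤) {x : G}
    (w : (cayleyGraph S).Walk 1 x) (hw : w.length = nrm S x) {i : ℕ} (hi : i ≤ w.length) :
    nrm S (w.getVert i) = i := by
  have h1 : nrm S (w.getVert i) ≤ i := by
    have := dist_getVert_le (S := S) w i
    simpa [nrm] using this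
  have h2 : (cayleyGraph S).dist (w.getVert i) x ≤ w.length - i := dist_getVert_to_end_le w i
  have h3 : nrm S x ≤ nrm S (w.getVert i) + (w.length - i) := by
    calc nrm S x = (cayleyGraph S).dist 1 x := rfl
      _ ≤ (cayleyGraph S).dist 1 (w.getVert i) + (cayleyGraph S).dist (w.getVert i) x :=
          dist_triangle hgen _ _ _
      _ ≤ nrm S (w.getVert i) + (w.length - i) := Nat.add_le_add le_rfl h2
  omega

/-- discrete intermediate value theorem -/
lemma ivt {f : ℕ → ℕ} {m t : ℕ} (hstep : ∀ i, i < m → f (i+1) ≤ f i + 1)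
    (h0 : f 0 ≤ t) (hm : t ≤ f m) : ∃ i, i ≤ m ∧ f i = t := by
  induction m with
  | zero => exact ⟨0, le_refl 0, le_antisymm h0 hm⟩
  | succ n ih =>
    by_cases hc : t ≤ f n
    · obtain ⟨i, hi, hfi⟩ := ih (fun i hi => hstep i (by omega)) hc
      exact ⟨i, by omega, hfi⟩
    · have := hstep n (by omega)
      exact ⟨n+1, le_refl _, by omega⟩

/-- the neighbors of a point lie in finitely many spots -/
lemma adj_mem_mul {x y : G} (h : (cayleyGraph S).Adj x y) :
    y ∈ (fun s => x * s) '' (S ∪ S⁻¹) := by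
  rcases h.2 with hs | hs
  · exact ⟨x⁻¹ * y, Or.inl hs, by group⟩
  · exact ⟨x⁻¹ * y, Or.inr (by simpa using hs), by group⟩

lemma ball_finite (hS : S.Finite) (hgen : Subgroup.closure S = ⊤) (n : ℕ) :
    (ball S n).Finite := by
  classical
  induction n with
  | zero =>
    apply Set.Finite.subset (Set.finite_singleton (1 : G))
    intro x hx
    have : nrm S x = 0 := Nat.le_zero.mp hx
    simpa using (nrm_eq_zero hgen).mp this
  | succ n ih =>
    have hnb : (⋃ x ∈ ball S n, (fun s => x * s) '' (S ∪ S⁻¹)).Finite := by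
      apply Set.Finite.biUnion ih
      intro x _
      exact Set.Finite.image _ (hS.union hS.inv)
    apply Set.Finite.subset (ih.union hnb)
    intro y hy
    have hy' : nrm S y ≤ n + 1 := hy
    by_cases h0 : nrm S y ≤ n
    · exact Or.inl h0
    · have hne : nrm S y ≠ 0 := by omega
      obtain ⟨w, hw⟩ := exists_geodesic hgen y
      -- penultimate vertex
      have hlen : w.length = nrm S y := hw
      have hpos : 0 < w.length := by omega
      set p := w.getVert (w.length - 1) with hp
      have hadj : (cayleyGraph S).Adj p y := by
        have := w.adj_getVert_succ (i := w.length - 1) (by omega)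
        rw [show w.length - 1 + 1 = w.length by omega, w.getVert_length] at this
        exact this
      have hpn : nrm S p ≤ n := by
        have h5 := nrm_getVert_geodesic hgen w hw (i := w.length - 1) (by omega)
        rw [hp]
        omega
      exact Or.inr (Set.mem_biUnion hpn (adj_mem_mul hadj))

lemma sphere_finite (hS : S.Finite) (hgen : Subgroup.closure S = ⊤) (n : ℕ) :
    (cayleySphere S n).Finite := by
  apply Set.Finite.subset (ball_finite hS hgen n)
  intro x hx
  exact le_of_eq hx

lemma sphere_nonempty (hS : S.Finite) (hgen : Subgroup.closure S = ⊤) [Infinite G] (n : ℕ) :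
    ∃ x : G, nrm S x = n := by
  have hinf : (Set.univ : Set G).Infinite := Set.infinite_univ
  have hne : ¬ ((Set.univ : Set G) ⊆ ball S n) := fun hsub =>
    hinf (Set.Finite.subset (ball_finite hS hgen n) hsub)
  obtain ⟨y, -, hy⟩ := Set.not_subset.mp hne
  have hyn : n < nrm S y := Nat.lt_of_not_le hy
  obtain ⟨w, hw⟩ := exists_geodesic hgen y
  exact ⟨w.getVert n, nrm_getVert_geodesic hgen w hw (by omega)⟩

lemma dist_adj_step (hgen : Subgroup.closure S = ⊤) {u a b : G} (h : (cayleyGraph S).Adj a b) :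
    (cayleyGraph S).dist u b ≤ (cayleyGraph S).dist u a + 1 := by
  have := dist_triangle hgen u a b
  simpa [SimpleGraph.dist_eq_one_iff_adj.mpr h] using this

lemma packing (hS : S.Finite) (hgen : Subgroup.closure S = ⊤) [Infinite G] {k n : ℕ}
    (hkn : k ≤ n) :
    (ball S k).ncard ≤ (2*k+1) * (cayleySphere S n).ncard := by
  classical
  obtain ⟨y, hy⟩ := sphere_nonempty hS hgen (n + k)
  obtain ⟨w, hw⟩ := exists_geodesic hgen y
  have hwl : w.length = n + k := by rw [hw, hy]
  -- for each u in the ball, find a crossing index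
  have key : ∀ u ∈ ball S k, ∃ i, n - k ≤ i ∧ i ≤ n + k ∧
      nrm S ((w.getVert i)⁻¹ * u) = n := by
    intro u hu
    have hu' : nrm S u ≤ k := hu
    have hstep : ∀ i, i < n + k →
        (cayleyGraph S).dist u (w.getVert (i+1)) ≤ (cayleyGraph S).dist u (w.getVert i) + 1 := by
      intro i hi
      exact dist_adj_step hgen (w.adj_getVert_succ (by omega))
    have h0 : (cayleyGraph S).dist u (w.getVert 0) ≤ n := by
      rw [w.getVert_zero, SimpleGraph.dist_comm]
      exact le_trans hu' (le_trans hkn (le_refl n))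
    have hm : n ≤ (cayleyGraph S).dist u (w.getVert (n+k)) := by
      have hgv : w.getVert (n+k) = y := by rw [← hwl]; exact w.getVert_length
      rw [hgv]
      have := dist_triangle hgen 1 u y
      have hdy : (cayleyGraph S).dist 1 y = n + k := hy
      have : n + k ≤ nrm S u + (cayleyGraph S).dist u y := by rw [← hdy]; exact this
      omega
    obtain ⟨i, hile, hfi⟩ := ivt (f := fun i => (cayleyGraph S).dist u (w.getVert i))
      (m := n + k) (t := n) hstep h0 hm
    refine ⟨i, ?_, hile, ?_⟩
    · -- lower bound on i
      have : (cayleyGraph S).dist u (w.getVert i) ≤ nrm S u + i := by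
        have ht := dist_triangle hgen u 1 (w.getVert i)
        have h2 : (cayleyGraph S).dist u 1 = nrm S u := by
          rw [SimpleGraph.dist_comm]; rfl
        have h3 := dist_getVert_le (S := S) w i
        omega
      have hfi' : (cayleyGraph S).dist u (w.getVert i) = n := hfi
      omega
    · rw [← dist_eq_nrm, SimpleGraph.dist_comm]
      exact hfi
  -- totalized choice of crossing index
  have key' : ∀ u : G, ∃ i, u ∈ ball S k → (n - k ≤ i ∧ i ≤ n + k ∧
      nrm S ((w.getVert i)⁻¹ * u) = n) := by
    intro u
    by_cases hu : u ∈ ball S k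
    · exact (key u hu).imp (fun i h => fun _ => h)
    · exact ⟨0, fun h => absurd h hu⟩
  set ι : G → ℕ := fun u => Classical.choose (key' u) with hι
  have hιspec : ∀ u ∈ ball S k, n - k ≤ ι u ∧ ι u ≤ n + k ∧
      nrm S ((w.getVert (ι u))⁻¹ * u) = n := fun u hu => Classical.choose_spec (key' u) hu
  classical
  set B := (ball_finite hS hgen k).toFinset with hB
  set Sp := (sphere_finite hS hgen n).toFinset with hSp
  have hcard : B.card ≤ ((Finset.range (2*k+1)) ×ˢ Sp).card := by
    apply Finset.card_le_card_of_injOn (fun u => (ι u - (n - k), (w.getVert (ι u))⁻¹ * u))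
    · intro u hu
      have hu' : u ∈ ball S k := (Set.Finite.mem_toFinset _).mp hu
      obtain ⟨h1, h2, h3⟩ := hιspec u hu'
      simp only [Finset.mem_coe, Finset.mem_product]
      constructor
      · rw [Finset.mem_range]; omega
      · rw [hSp, Set.Finite.mem_toFinset]; exact h3
    · intro u₁ hu₁ u₂ hu₂ heq
      have hu₁' : u₁ ∈ ball S k := (Set.Finite.mem_toFinset _).mp hu₁
      have hu₂' : u₂ ∈ ball S k := (Set.Finite.mem_toFinset _).mp hu₂
      obtain ⟨h11, h12, -⟩ := hιspec u₁ hu₁'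
      obtain ⟨h21, h22, -⟩ := hιspec u₂ hu₂'
      simp only [Prod.mk.injEq] at heq
      obtain ⟨he1, he2⟩ := heq
      have hii : ι u₁ = ι u₂ := by omega
      rw [hii] at he2
      exact mul_left_cancel he2
  calc (ball S k).ncard = B.card := Set.ncard_eq_toFinset_card _ (ball_finite hS hgen k)
    _ ≤ ((Finset.range (2*k+1)) ×ˢ Sp).card := hcard
    _ = (2*k+1) * Sp.card := by rw [Finset.card_product, Finset.card_range]
    _ = (2*k+1) * (cayleySphere S n).ncard := by
        rw [Set.ncard_eq_toFinset_card _ (sphere_finite hS hgen n)]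

lemma nrm_pow_le (hgen : Subgroup.closure S = ⊤) (g : G) (k : ℕ) :
    nrm S (g ^ k) ≤ k * nrm S g := by
  induction k with
  | zero => simp [nrm_one]
  | succ j ih =>
    calc nrm S (g ^ (j + 1)) = nrm S (g ^ j * g) := by rw [pow_succ]
      _ ≤ nrm S (g ^ j) + nrm S g := nrm_mul_le hgen _ _
      _ ≤ j * nrm S g + nrm S g := Nat.add_le_add_right ih _
      _ = (j + 1) * nrm S g := by ring

lemma pow_inj_of_infinite_order {g : G} (hg : ∀ k : ℕ, 1 ≤ k → g ^ k ≠ 1)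
    {k k' : ℕ} (h : g ^ k = g ^ k') : k = k' := by
  rcases Nat.lt_trichotomy k k' with hlt | heq | hgt
  · exfalso
    apply hg (k' - k) (by omega)
    have : g ^ (k' - k) * g ^ k = g ^ k' := by rw [← pow_add]; congr 1; omega
    rw [← h] at this
    exact mul_right_cancel (by rw [this, one_mul])
  · exact heq
  · exfalso
    apply hg (k - k') (by omega)
    have : g ^ (k - k') * g ^ k' = g ^ k := by rw [← pow_add]; congr 1; omega
    rw [h] at this
    exact mul_right_cancel (by rw [this, one_mul])

lemma isCyclic_zpowers (g : G) : IsCyclic (Subgroup.zpowers g) := by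
  refine ⟨⟨⟨g, Subgroup.mem_zpowers g⟩, ?_⟩⟩
  rintro ⟨x, hx⟩
  obtain ⟨k, hk⟩ := Subgroup.mem_zpowers_iff.mp hx
  refine Subgroup.mem_zpowers_iff.mpr ⟨k, ?_⟩
  apply Subtype.ext
  simp only [SubgroupClass.coe_zpow]
  exact hk

lemma finiteIndex_zpowers (hS : S.Finite) (hgen : Subgroup.closure S = ⊤) [Infinite G]
    {g : G} (hg : ∀ k : ℕ, 1 ≤ k → g ^ k ≠ 1)
    {L : ℕ} (hL : ∀ k, (ball S k).ncard ≤ (2*k+1) * L) :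
    (Subgroup.zpowers g).FiniteIndex := by
  classical
  set H := Subgroup.zpowers g with hH
  rcases finite_or_infinite (G ⧸ H) with hfin | hinf
  · exact @Subgroup.finiteIndex_of_finite_quotient G _ H hfin
  · exfalso
    set d := nrm S g with hd
    set M := (2*d+3)*L + 1 with hM
    obtain ⟨s, hs⟩ := Infinite.exists_subset_card_eq (G ⧸ H) M
    set m := s.sup (fun q => nrm S q.out) with hm
    have hrep : ∀ q ∈ s, nrm S q.out ≤ m := fun q hq =>
      Finset.le_sup (f := fun q => nrm S q.out) hq
    -- injection into a ball
    have hmaps : ∀ p ∈ s ×ˢ Finset.range (m+1),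
        (p.1.out * g ^ p.2) ∈ (ball_finite hS hgen (m*(d+1))).toFinset := by
      rintro ⟨q, k⟩ hp
      rw [Finset.mem_product] at hp
      obtain ⟨hq, hk⟩ := hp
      rw [Finset.mem_range] at hk
      rw [Set.Finite.mem_toFinset]
      show nrm S (q.out * g ^ k) ≤ m*(d+1)
      calc nrm S (q.out * g ^ k) ≤ nrm S q.out + nrm S (g ^ k) := nrm_mul_le hgen _ _
        _ ≤ m + k * d := Nat.add_le_add (hrep q hq) (nrm_pow_le hgen g k)
        _ ≤ m + m * d := by
            have : k ≤ m := by omega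
            exact Nat.add_le_add_left (Nat.mul_le_mul_right d this) m
        _ = m*(d+1) := by ring
    have hinjOn : Set.InjOn (fun p : (G ⧸ H) × ℕ => p.1.out * g ^ p.2)
        (s ×ˢ Finset.range (m+1) : Finset _) := by
      rintro ⟨q, k⟩ hp ⟨q', k'⟩ hp' heq
      simp only at heq
      have hq : QuotientGroup.mk (q.out * g ^ k) = q := by
        rw [QuotientGroup.mk_mul_of_mem _ (by
          exact Subgroup.pow_mem _ (Subgroup.mem_zpowers g) k)]
        exact Quotient.out_eq' q
      have hq' : QuotientGroup.mk (q'.out * g ^ k') = q' := by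
        rw [QuotientGroup.mk_mul_of_mem _ (by
          exact Subgroup.pow_mem _ (Subgroup.mem_zpowers g) k')]
        exact Quotient.out_eq' q'
      have hqq : q = q' := by rw [← hq, ← hq', heq]
      have : g ^ k = g ^ k' := by
        apply mul_left_cancel (a := q.out)
        rw [heq, hqq]
      have := pow_inj_of_infinite_order hg this
      simp [hqq, this]
    have hcount := Finset.card_le_card_of_injOn _ hmaps hinjOn
    rw [Finset.card_product, Finset.card_range, hs] at hcount
    have hball : ((ball_finite hS hgen (m*(d+1))).toFinset).card ≤ (2*(m*(d+1))+1) * L := by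
      rw [← Set.ncard_eq_toFinset_card _ (ball_finite hS hgen (m*(d+1)))]
      exact hL _
    have hfinal : M * (m+1) ≤ (2*(m*(d+1))+1) * L := le_trans hcount hball
    -- arithmetic contradiction
    have hexp : (2*(m*(d+1))+1) * L = 2*m*(d+1)*L + L := by ring
    have hexp2 : M * (m+1) = (2*d+3)*L*m + (2*d+3)*L + m + 1 := by rw [hM]; ring
    have hc1 : 2*m*(d+1)*L ≤ (2*d+3)*L*m := by
      have : 2*(d+1) ≤ 2*d+3 := by omega
      calc 2*m*(d+1)*L = (2*(d+1))*L*m := by ring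
        _ ≤ (2*d+3)*L*m := Nat.mul_le_mul_right m (Nat.mul_le_mul_right L this)
    have hc2 : L ≤ (2*d+3)*L := Nat.le_mul_of_pos_left L (by omega)
    omega

/-- connectivity avoiding a forbidden set -/
def Avoid (S : Set G) (F : Set G) (x y : G) : Prop :=
  ∃ w : (cayleyGraph S).Walk x y, ∀ v ∈ w.support, v ∉ F

lemma Avoid.notMem_left {F : Set G} {x y : G} (h : Avoid S F x y) : x ∉ F := by
  obtain ⟨w, hw⟩ := h
  exact hw x w.start_mem_support

lemma Avoid.notMem_right {F : Set G} {x y : G} (h : Avoid S F x y) : y ∉ F := by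
  obtain ⟨w, hw⟩ := h
  exact hw y w.end_mem_support

lemma avoid_refl {F : Set G} {x : G} (hx : x ∉ F) : Avoid S F x x :=
  ⟨SimpleGraph.Walk.nil, by simpa using hx⟩

lemma Avoid.symm {F : Set G} {x y : G} (h : Avoid S F x y) : Avoid S F y x := by
  obtain ⟨w, hw⟩ := h
  exact ⟨w.reverse, by simpa [SimpleGraph.Walk.support_reverse] using hw⟩

lemma Avoid.trans {F : Set G} {x y z : G} (h : Avoid S F x y) (h' : Avoid S F y z) :
    Avoid S F x z := by
  obtain ⟨w, hw⟩ := h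
  obtain ⟨w', hw'⟩ := h'
  refine ⟨w.append w', fun v hv => ?_⟩
  rcases (SimpleGraph.Walk.mem_support_append_iff _ _).mp hv with h1 | h1
  · exact hw v h1
  · exact hw' v h1

lemma Avoid.mono {F F' : Set G} {x y : G} (hsub : F' ⊆ F) (h : Avoid S F x y) :
    Avoid S F' x y := by
  obtain ⟨w, hw⟩ := h
  exact ⟨w, fun v hv hc => hw v hv (hsub hc)⟩

lemma avoid_translate {F : Set G} {x y : G} (g : G) (h : Avoid S F x y) :
    Avoid S ((fun v => g * v) '' F) (g * x) (g * y) := by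
  obtain ⟨w, hw⟩ := h
  refine ⟨(w.map (leftMul S g).toHom).copy (by simp [leftMul]) (by simp [leftMul]), ?_⟩
  intro v hv
  erw [SimpleGraph.Walk.support_copy, SimpleGraph.Walk.support_map] at hv
  obtain ⟨c, hc, rfl⟩ := List.mem_map.mp hv
  rintro ⟨f, hf, hfc⟩
  have hcf : c = f := by
    have hfc' : g * f = g * c := hfc
    exact (mul_left_cancel hfc').symm
  exact hw c hc (hcf ▸ hf)

lemma translate_ball (g : G) (n : ℕ) :
    (fun v => g * v) '' (ball S n) = {x : G | (cayleyGraph S).dist g x ≤ n} := by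
  ext x
  constructor
  · rintro ⟨v, hv, rfl⟩
    show (cayleyGraph S).dist g (g * v) ≤ n
    rw [dist_eq_nrm]
    simpa [nrm, ball] using hv
  · intro hx
    refine ⟨g⁻¹ * x, ?_, by group⟩
    show nrm S (g⁻¹ * x) ≤ n
    rw [← dist_eq_nrm]
    exact hx

lemma nrm_mul_ge (hgen : Subgroup.closure S = ⊤) (a b : G) :
    nrm S a ≤ nrm S (a * b) + nrm S b := by
  have := nrm_mul_le hgen (a * b) b⁻¹
  rw [mul_assoc, mul_inv_cancel, mul_one, nrm_inv] at this
  exact this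

lemma mem_support_drop {x y v : G} (p : (cayleyGraph S).Walk x y) (i : ℕ)
    (hv : v ∈ (p.drop i).support) : ∃ j, i ≤ j ∧ v = p.getVert j := by
  classical
  induction p generalizing i with
  | nil =>
    refine ⟨i, le_rfl, ?_⟩
    cases i with
    | zero => simpa [SimpleGraph.Walk.drop] using hv
    | succ n => simpa [SimpleGraph.Walk.drop] using hv
  | @cons a b c h q ih =>
    cases i with
    | zero =>
      rw [show (SimpleGraph.Walk.cons h q).drop 0
        = (SimpleGraph.Walk.cons h q).copy (SimpleGraph.Walk.getVert_zero _).symm rfl from rfl,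
        SimpleGraph.Walk.support_copy] at hv
      obtain ⟨j, hj, hj2⟩ := SimpleGraph.Walk.mem_support_iff_exists_getVert.mp hv
      exact ⟨j, Nat.zero_le _, hj.symm⟩
    | succ n =>
      rw [show (SimpleGraph.Walk.cons h q).drop (n+1)
        = (q.drop n).copy (SimpleGraph.Walk.getVert_cons_succ _ h).symm rfl from rfl,
        SimpleGraph.Walk.support_copy] at hv
      obtain ⟨j, hj, hj2⟩ := ih n hv
      exact ⟨j + 1, by omega, by rwa [SimpleGraph.Walk.getVert_cons_succ]⟩

/-- Lemma T0 : trapping. If `g` is deep and not avoid-connected to its inverse,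
then left translation by `g` keeps non-`C₂` points away from the ball. -/
lemma trap (hgen : Subgroup.closure S = ⊤) {n : ℕ} {g x : G}
    (hg : 2*n+2 ≤ nrm S g) (hx : ¬ Avoid S (ball S n) g⁻¹ x) :
    Avoid S (ball S n) g (g * x) := by
  classical
  obtain ⟨w, hw⟩ := exists_geodesic hgen x
  have hclaim : ∀ v ∈ w.support, g * v ∉ ball S n := by
    intro v hv hmem
    apply hx
    have hmem' : nrm S (g * v) ≤ n := hmem
    obtain ⟨i, hiv, hile⟩ := SimpleGraph.Walk.mem_support_iff_exists_getVert.mp hv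
    -- nrm of v is i and at least n+2
    have hnv : nrm S v = i := by rw [← hiv]; exact nrm_getVert_geodesic hgen w hw hile
    have hlow : n + 2 ≤ nrm S v := by
      have h1 : nrm S g⁻¹ ≤ nrm S (g⁻¹ * (g * v)) + nrm S (g * v) := nrm_mul_ge hgen _ _
      rw [nrm_inv] at h1
      have h2 : g⁻¹ * (g * v) = v := by group
      rw [h2] at h1
      omega
    -- walk from g⁻¹ to v avoiding the ball
    have havoid1 : Avoid S (ball S n) g⁻¹ v := by
      obtain ⟨u, hu⟩ := exists_geodesic hgen (g * v)
      refine ⟨((u.map (leftMul S g⁻¹).toHom).copy (by simp [leftMul])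
        (by show g⁻¹ * (g * v) = v; group)), ?_⟩
      intro c hc
      erw [SimpleGraph.Walk.support_copy, SimpleGraph.Walk.support_map] at hc
      obtain ⟨c', hc', rfl⟩ := List.mem_map.mp hc
      obtain ⟨j, hjc, hjle⟩ := SimpleGraph.Walk.mem_support_iff_exists_getVert.mp hc'
      have hnc' : nrm S c' = j := by rw [← hjc]; exact nrm_getVert_geodesic hgen u hu hjle
      have hjn : j ≤ n := by
        have : u.length = nrm S (g * v) := hu
        omega
      intro hmem2
      have hmem2' : nrm S ((leftMul S g⁻¹).toHom c') ≤ n := hmem2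
      have heq : (leftMul S g⁻¹).toHom c' = g⁻¹ * c' := rfl
      rw [heq] at hmem2'
      have h1 : nrm S g⁻¹ ≤ nrm S (g⁻¹ * c') + nrm S c' := nrm_mul_ge hgen _ _
      rw [nrm_inv] at h1
      omega
    -- walk from v to x avoiding the ball
    have havoid2 : Avoid S (ball S n) v x := by
      refine ⟨(w.drop i).copy hiv rfl, ?_⟩
      intro c hc
      rw [SimpleGraph.Walk.support_copy] at hc
      obtain ⟨j, hij, rfl⟩ := mem_support_drop w i hc
      intro hmem2
      have hmem2' : nrm S (w.getVert j) ≤ n := hmem2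
      rcases le_or_gt j w.length with hjl | hjl
      · have : nrm S (w.getVert j) = j := nrm_getVert_geodesic hgen w hw hjl
        omega
      · rw [w.getVert_of_length_le (le_of_lt hjl)] at hmem2'
        have : w.length = nrm S x := hw
        have : i ≤ w.length := hile
        omega
    exact havoid1.trans havoid2
  refine ⟨(w.map (leftMul S g).toHom).copy (by simp [leftMul]) rfl, ?_⟩
  intro v hv
  erw [SimpleGraph.Walk.support_copy, SimpleGraph.Walk.support_map] at hv
  obtain ⟨c, hc, rfl⟩ := List.mem_map.mp hv
  exact hclaim c hc

/-- Lemma T : infinite order from one-sided trapping. -/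
lemma infinite_order_of_trap (hgen : Subgroup.closure S = ⊤) {n : ℕ} {g : G}
    (hg : 2*n+2 ≤ nrm S g) (hgg : ¬ Avoid S (ball S n) g g⁻¹) :
    ∀ k : ℕ, 1 ≤ k → g ^ k ≠ 1 := by
  have key : ∀ k : ℕ, 1 ≤ k → Avoid S (ball S n) g (g ^ k) := by
    intro k hk
    induction k with
    | zero => omega
    | succ j ih =>
      rcases Nat.lt_or_ge j 1 with hj | hj
      · have : j = 0 := by omega
        subst this
        have hg1 : g ^ (0+1) = g := by simp
        rw [hg1]
        refine avoid_refl (S := S) ?_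
        intro hmem
        have : nrm S g ≤ n := hmem
        omega
      · have havj := ih hj
        have hnotC2 : ¬ Avoid S (ball S n) g⁻¹ (g ^ j) := by
          intro hc
          exact hgg (havj.trans hc.symm)
        have := trap hgen hg hnotC2
        rw [← pow_succ'] at this
        exact this
  intro k hk hone
  have := (key k hk).notMem_right
  rw [hone] at this
  exact this (by simp [ball, nrm_one])

/-- Product lemma: from two deep points in different components (with the
avoidance-symmetric hypothesis) produce an element of infinite order. -/
lemma infinite_order_of_two_comps (hgen : Subgroup.closure S = ⊤) {n : ℕ} {x y : G}
    (hD2 : ∀ h : G, 2*n+2 ≤ nrm S h → Avoid S (ball S n) h h⁻¹)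
    (hx : 2*n+2 ≤ nrm S x) (hy : nrm S x + (2*n+2) ≤ nrm S y)
    (hxy : ¬ Avoid S (ball S n) x y) :
    ∃ z : G, ∀ k : ℕ, 1 ≤ k → z ^ k ≠ 1 := by
  have hyn : 2*n+2 ≤ nrm S y := by omega
  have hxinv : Avoid S (ball S n) x x⁻¹ := hD2 x hx
  have hyinv : Avoid S (ball S n) y y⁻¹ := hD2 y hyn
  -- x⁻¹ is not avoid-connected to y
  have hxinvy : ¬ Avoid S (ball S n) x⁻¹ y := fun hc => hxy (hxinv.trans hc)
  have hznrm : 2*n+2 ≤ nrm S (x * y) := by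
    have h1 : nrm S y ≤ nrm S x⁻¹ + nrm S (x * y) := by
      have := nrm_mul_le hgen x⁻¹ (x * y)
      have h2 : x⁻¹ * (x * y) = y := by group
      rwa [h2] at this
    rw [nrm_inv] at h1
    omega
  have hAz : Avoid S (ball S n) x (x * y) := trap hgen hx hxinvy
  have hAzinv : Avoid S (ball S n) y⁻¹ (x * y)⁻¹ := by
    have hyx : ¬ Avoid S (ball S n) (y⁻¹)⁻¹ x⁻¹ := by
      rw [inv_inv]
      intro hc
      exact hxy (hxinv.trans hc.symm)
    have := trap hgen (by rwa [nrm_inv]) hyx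
    rwa [mul_inv_rev]
  have hzz : ¬ Avoid S (ball S n) (x * y) (x * y)⁻¹ := by
    intro hc
    exact hxy (((hAz.trans hc).trans hAzinv.symm).trans hyinv.symm)
  exact ⟨x * y, infinite_order_of_trap hgen hznrm hzz⟩

/-! ### Helper lemmas for the extraction argument -/

lemma infinite_of_unbounded {A : Set ℕ} (h : ∀ N, ∃ j, N ≤ j ∧ j ∈ A) : A.Infinite := by
  intro hfin
  obtain ⟨j, hj, hjA⟩ := h ((hfin.toFinset.sup id) + 1)
  have := Finset.le_sup (f := id) ((Set.Finite.mem_toFinset hfin).mpr hjA)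
  simp only [id] at this
  omega

lemma exists_ge_of_infinite {A : Set ℕ} (hA : A.Infinite) (N : ℕ) : ∃ j, N ≤ j ∧ j ∈ A := by
  by_contra h
  push_neg at h
  apply hA
  apply Set.Finite.subset (Set.finite_Iio N)
  intro j hj
  rw [Set.mem_Iio]
  by_contra hj'
  exact h j (by omega) hj

lemma pigeon_infinite {γ : Type*} {A : Set ℕ} (hA : A.Infinite) (f : ℕ → γ)
    (hfin : (f '' A).Finite) : ∃ c ∈ f '' A, {j ∈ A | f j = c}.Infinite := by
  by_contra h
  push_neg at h
  apply hA
  have : A ⊆ ⋃ c ∈ f '' A, {j ∈ A | f j = c} := by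
    intro j hj
    exact Set.mem_biUnion ⟨j, hj, rfl⟩ ⟨hj, rfl⟩
  exact Set.Finite.subset (Set.Finite.biUnion hfin (fun c hc => h c hc)) this

lemma exists_big_nrm (hS : S.Finite) (hgen : Subgroup.closure S = ⊤) {A : Set G}
    (hA : A.Infinite) (m : ℕ) : ∃ x ∈ A, m < nrm S x := by
  by_contra h
  push_neg at h
  exact hA (Set.Finite.subset (ball_finite hS hgen m) (fun x hx => h x hx))

lemma exists_maxnrm {F : Set G} (hF : F.Finite) : ∃ M, ∀ x ∈ F, nrm S x ≤ M := by
  classical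
  refine ⟨hF.toFinset.sup (nrm S), fun x hx => ?_⟩
  exact Finset.le_sup ((Set.Finite.mem_toFinset hF).mpr hx)

lemma ball_ncard_lower (hS : S.Finite) (hgen : Subgroup.closure S = ⊤) [Infinite G] (m : ℕ) :
    m + 1 ≤ (ball S m).ncard := by
  classical
  have hch : ∀ i : ℕ, ∃ x : G, nrm S x = i := fun i => sphere_nonempty hS hgen i
  set f : ℕ → G := fun i => Classical.choose (hch i) with hf
  have hfs : ∀ i, nrm S (f i) = i := fun i => Classical.choose_spec (hch i)
  have hinj : Set.InjOn f (Finset.range (m+1)) := by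
    intro i _ j _ hij
    have := hfs i
    rw [hij, hfs j] at this
    omega
  have hsub : ∀ i ∈ Finset.range (m+1), f i ∈ (ball_finite hS hgen m).toFinset := by
    intro i hi
    rw [Finset.mem_range] at hi
    rw [Set.Finite.mem_toFinset]
    show nrm S (f i) ≤ m
    rw [hfs i]
    omega
  have := Finset.card_le_card_of_injOn f hsub hinj
  rw [Finset.card_range] at this
  rwa [Set.ncard_eq_toFinset_card _ (ball_finite hS hgen m)]

/-- first-hit decomposition of a walk with respect to a set `C` -/
lemma split_first {C : Set G} : ∀ {x y : G} (w : (cayleyGraph S).Walk x y), x ∉ C →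
    (∀ v ∈ w.support, v ∉ C) ∨
    (∃ a c : G, (cayleyGraph S).Adj a c ∧ c ∈ C ∧
      ∃ w₁ : (cayleyGraph S).Walk x a, (∀ v ∈ w₁.support, v ∉ C) ∧
        (∀ v ∈ w₁.support, v ∈ w.support)) := by
  intro x y w
  induction w with
  | nil =>
    intro hx
    left
    simpa using hx
  | @cons a b c h q ih =>
    intro hx
    by_cases hb : b ∈ C
    · right
      exact ⟨a, b, h, hb, SimpleGraph.Walk.nil, by simpa using hx,
        by simp⟩
    · rcases ih hb with hclean | ⟨a', c', hadj, hc', w₁, hw₁, hw₁sub⟩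
      · left
        intro v hv
        rw [SimpleGraph.Walk.support_cons, List.mem_cons] at hv
        rcases hv with rfl | hv
        · exact hx
        · exact hclean v hv
      · right
        refine ⟨a', c', hadj, hc', SimpleGraph.Walk.cons h w₁, ?_, ?_⟩
        · intro v hv
          rw [SimpleGraph.Walk.support_cons, List.mem_cons] at hv
          rcases hv with rfl | hv
          · exact hx
          · exact hw₁ v hv
        · intro v hv
          rw [SimpleGraph.Walk.support_cons, List.mem_cons] at hv
          rw [SimpleGraph.Walk.support_cons, List.mem_cons]
          rcases hv with rfl | hv
          · left; rfl
          · right; exact hw₁sub v hv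

/-- walks from the identity avoiding the sphere of radius `j` stay inside the ball -/
lemma avoid_sphere_stays (hgen : Subgroup.closure S = ⊤) {j : ℕ} (hj : 1 ≤ j) :
    ∀ {a b : G} (w : (cayleyGraph S).Walk a b), (∀ v ∈ w.support, v ∉ cayleySphere S j) →
      nrm S a < j → nrm S b < j := by
  intro a b w
  induction w with
  | nil => exact fun _ ha => ha
  | @cons a' b' c' h q ih =>
    intro hsup ha
    have hb' : nrm S b' ≤ nrm S a' + 1 := adj_nrm_le hgen h
    have hbs : b' ∉ cayleySphere S j := by
      apply hsup
      rw [SimpleGraph.Walk.support_cons, List.mem_cons]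
      right
      exact SimpleGraph.Walk.start_mem_support q
    have hbne : nrm S b' ≠ j := hbs
    have : nrm S b' < j := by omega
    apply ih ?_ this
    intro v hv
    apply hsup
    rw [SimpleGraph.Walk.support_cons, List.mem_cons]
    exact Or.inr hv

/-- the full sphere blocks -/
lemma blocks_sphere (hS : S.Finite) (hgen : Subgroup.closure S = ⊤) {j : ℕ} (hj : 1 ≤ j) :
    {x : G | Avoid S (cayleySphere S j) 1 x}.Finite := by
  apply Set.Finite.subset (ball_finite hS hgen j)
  rintro x ⟨w, hw⟩
  have := avoid_sphere_stays hgen hj w hw (by rw [nrm_one]; omega)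
  exact le_of_lt this

/-- the ball of radius `j - 1` is in the identity's avoidance class of any `T ⊆ sphere j` -/
lemma ball_avoid (hgen : Subgroup.closure S = ⊤) {j : ℕ} (hj : 1 ≤ j) {T : Set G}
    (hT : T ⊆ cayleySphere S j) {x : G} (hx : nrm S x < j) : Avoid S T 1 x := by
  obtain ⟨w, hw⟩ := exists_geodesic hgen x
  refine ⟨w, fun v hv hvT => ?_⟩
  obtain ⟨i, hiv, hile⟩ := SimpleGraph.Walk.mem_support_iff_exists_getVert.mp hv
  have : nrm S v = i := by rw [← hiv]; exact nrm_getVert_geodesic hgen w hw hile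
  have hvj : nrm S v = j := hT hvT
  have : w.length = nrm S x := hw
  omega

/-- existence of a minimal blocking subset of a sphere -/
lemma exists_minimal_blocking [DecidableEq G] (hS : S.Finite) (hgen : Subgroup.closure S = ⊤)
    {j : ℕ} (hj : 1 ≤ j) :
    ∃ T : Finset G, ↑T ⊆ cayleySphere S j ∧ {x : G | Avoid S ↑T 1 x}.Finite ∧
      (∀ u ∈ T, ¬ {x : G | Avoid S ↑(T.erase u) 1 x}.Finite) := by
  classical
  set P : Finset G → Prop :=
    fun T => ↑T ⊆ cayleySphere S j ∧ {x : G | Avoid S ↑T 1 x}.Finite with hP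
  have hex : ∃ n, ∃ T : Finset G, T.card = n ∧ P T := by
    refine ⟨(sphere_finite hS hgen j).toFinset.card, (sphere_finite hS hgen j).toFinset,
      rfl, ?_, ?_⟩
    · intro x hx
      rwa [Finset.mem_coe, Set.Finite.mem_toFinset] at hx
    · have := blocks_sphere hS hgen hj
      apply Set.Finite.subset this
      intro x hx
      obtain ⟨w, hw⟩ := hx
      exact ⟨w, fun v hv hvS => hw v hv (by rwa [Finset.mem_coe, Set.Finite.mem_toFinset])⟩
  obtain ⟨T, hTcard, hT1, hT2⟩ := Nat.find_spec hex
  refine ⟨T, hT1, hT2, ?_⟩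
  intro u hu hfin
  have hlt : (T.erase u).card < Nat.find hex := by
    rw [← hTcard]
    exact Finset.card_erase_lt_of_mem hu
  apply Nat.find_min hex hlt
  refine ⟨T.erase u, rfl, ?_, hfin⟩
  intro x hx
  rw [Finset.mem_coe, Finset.mem_erase] at hx
  exact hT1 (Finset.mem_coe.mpr hx.2)

lemma refine_pairs {ι : Type*} (s : Finset ι) (hS : S.Finite) (hgen : Subgroup.closure S = ⊤)
    {A : Set ℕ} (hA : A.Infinite) (f : ι → ℕ → G) :
    ∃ B : Set ℕ, B ⊆ A ∧ B.Infinite ∧ ∀ i ∈ s,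
      (∃ c, ∀ j ∈ B, f i j = c) ∨ (∀ R, {j ∈ B | nrm S (f i j) ≤ R}.Finite) := by
  classical
  induction s using Finset.induction with
  | empty => exact ⟨A, subset_rfl, hA, by simp⟩
  | @insert i s hi ih =>
    obtain ⟨B₁, hB₁sub, hB₁inf, hB₁⟩ := ih
    by_cases hc : ∃ R, {j ∈ B₁ | nrm S (f i j) ≤ R}.Infinite
    · obtain ⟨R, hR⟩ := hc
      have himg : (f i '' {j ∈ B₁ | nrm S (f i j) ≤ R}).Finite := by
        apply Set.Finite.subset (ball_finite hS hgen R)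
        rintro x ⟨j, hj, rfl⟩
        exact hj.2
      obtain ⟨c, -, hcinf⟩ := pigeon_infinite hR (f i) himg
      set B₂ : Set ℕ := {j ∈ {j ∈ B₁ | nrm S (f i j) ≤ R} | f i j = c} with hB₂
      have hB₂B₁ : B₂ ⊆ B₁ := fun j hj => hj.1.1
      refine ⟨B₂, fun j hj => hB₁sub (hB₂B₁ hj), hcinf, ?_⟩
      intro i' hi'
      rcases Finset.mem_insert.mp hi' with rfl | hi's
      · exact Or.inl ⟨c, fun j hj => hj.2⟩
      · rcases hB₁ i' hi's with ⟨c', hc'⟩ | hfin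
        · exact Or.inl ⟨c', fun j hj => hc' j (hB₂B₁ hj)⟩
        · refine Or.inr (fun R' => Set.Finite.subset (hfin R') ?_)
          intro j hj
          exact ⟨hB₂B₁ hj.1, hj.2⟩
    · push_neg at hc
      refine ⟨B₁, hB₁sub, hB₁inf, ?_⟩
      intro i' hi'
      rcases Finset.mem_insert.mp hi' with rfl | hi's
      · exact Or.inr (fun R => hc R)
      · exact hB₁ i' hi's

lemma neighbors_finite (hS : S.Finite) (p : G) :
    {v : G | (cayleyGraph S).Adj v p}.Finite := by
  apply Set.Finite.subset (Set.Finite.image (fun s => p * s) (hS.union hS.inv))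
  intro v hv
  rcases hv.2 with h1 | h1
  · refine ⟨p⁻¹ * v, Or.inr ?_, by group⟩
    rw [Set.mem_inv]
    simpa [mul_inv_rev] using h1
  · exact ⟨p⁻¹ * v, Or.inl h1, by group⟩

lemma exists_max_list (l : List G) : ∃ M, ∀ v ∈ l, nrm S v ≤ M := by
  induction l with
  | nil => exact ⟨0, by simp⟩
  | cons a l ih =>
    obtain ⟨M, hM⟩ := ih
    refine ⟨max (nrm S a) M, ?_⟩
    intro v hv
    rcases List.mem_cons.mp hv with rfl | hv
    · exact le_max_left _ _
    · exact le_trans (hM v hv) (le_max_right _ _)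

lemma exists_separated_deep_points (hS : S.Finite) (hgen : Subgroup.closure S = ⊤) [Infinite G]
    {L : ℕ} (hL : ∀ N, ∃ j, N ≤ j ∧ 1 ≤ j ∧ (cayleySphere S j).ncard ≤ L) :
    ∃ (n : ℕ) (x y : G), 2*n+2 ≤ nrm S x ∧ nrm S x + (2*n+2) ≤ nrm S y ∧
      ¬ Avoid S (ball S n) x y := by
  classical
  set A₀ : Set ℕ := {j | 1 ≤ j ∧ (cayleySphere S j).ncard ≤ L} with hA₀
  have hA₀inf : A₀.Infinite := infinite_of_unbounded (fun N => by
    obtain ⟨j, h1, h2, h3⟩ := hL N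
    exact ⟨j, h1, h2, h3⟩)
  -- minimal blocking sets
  have hbl : ∀ j ∈ A₀, ∃ Tj : Finset G, ↑Tj ⊆ cayleySphere S j ∧
      {x : G | Avoid S ↑Tj 1 x}.Finite ∧
      (∀ u ∈ Tj, ¬ {x : G | Avoid S ↑(Tj.erase u) 1 x}.Finite) :=
    fun j hj => exists_minimal_blocking hS hgen hj.1
  choose! T hTsub hTfin hTmin using hbl
  -- nonemptiness
  have hTne : ∀ j ∈ A₀, (T j).Nonempty := by
    intro j hj
    rcases Finset.eq_empty_or_nonempty (T j) with he | hne
    · exfalso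
      apply Set.infinite_univ (α := G)
      apply Set.Finite.subset (hTfin j hj)
      intro x _
      obtain ⟨w, -⟩ := exists_geodesic hgen x
      refine ⟨w, fun v _ hv => ?_⟩
      rw [he] at hv
      simpa using hv
    · exact hne
  -- cardinality bound
  have hTcard : ∀ j ∈ A₀, (T j).card ≤ L := by
    intro j hj
    have h1 : (↑(T j) : Set G).ncard ≤ (cayleySphere S j).ncard :=
      Set.ncard_le_ncard (hTsub j hj) (sphere_finite hS hgen j)
    rw [Set.ncard_coe_finset] at h1
    exact le_trans h1 hj.2
  -- constant cardinality subsequence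
  have himgfin : ((fun j => (T j).card) '' A₀).Finite := by
    apply Set.Finite.subset (Set.finite_Iic L)
    rintro x ⟨j, hj, rfl⟩
    exact hTcard j hj
  obtain ⟨κ, -, hA₁inf⟩ := pigeon_infinite hA₀inf (fun j => (T j).card) himgfin
  set A₁ : Set ℕ := {j ∈ A₀ | (T j).card = κ} with hA₁
  have hA₁sub : A₁ ⊆ A₀ := fun j hj => hj.1
  have hκpos : 1 ≤ κ := by
    obtain ⟨j, hj⟩ := hA₁inf.nonempty
    have := hTne j (hA₁sub hj)
    have hc := hj.2
    rw [← hc]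
    exact Finset.card_pos.mpr this
  -- enumeration of the blocking sets
  have henum : ∀ j ∈ A₁, ∃ uj : Fin κ → G, (∀ i, uj i ∈ T j) ∧
      (∀ t ∈ T j, ∃ i, uj i = t) := by
    intro j hj
    have hcard : (T j).card = κ := hj.2
    set e := (T j).equivFin with he
    refine ⟨fun i => (e.symm (Fin.cast hcard.symm i)).1, fun i => (e.symm _).2, ?_⟩
    intro t ht
    refine ⟨Fin.cast hcard (e ⟨t, ht⟩), ?_⟩
    simp
  choose! u humem husurj using henum
  -- refine pairs
  obtain ⟨B, hBsub, hBinf, hBdich⟩ := refine_pairs (Finset.univ : Finset (Fin κ × Fin κ))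
    hS hgen hA₁inf (fun p j => (u j p.1)⁻¹ * u j p.2)
  have hBA₀ : B ⊆ A₀ := fun j hj => hA₁sub (hBsub hj)
  -- the relation
  set rel : Fin κ → Fin κ → Prop := fun α β => ∃ c, ∀ j ∈ B, (u j α)⁻¹ * u j β = c with hrel
  have hdich : ∀ α β : Fin κ, rel α β ∨
      (∀ R, {j ∈ B | nrm S ((u j α)⁻¹ * u j β) ≤ R}.Finite) := by
    intro α β
    exact hBdich (α, β) (Finset.mem_univ _)
  have hexcl : ∀ α β : Fin κ, rel α β →
      ¬ (∀ R, {j ∈ B | nrm S ((u j α)⁻¹ * u j β) ≤ R}.Finite) := by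
    rintro α β ⟨c, hc⟩ hfin
    apply hBinf
    have : B ⊆ {j ∈ B | nrm S ((u j α)⁻¹ * u j β) ≤ nrm S c} := by
      intro j hj
      refine ⟨hj, ?_⟩
      rw [hc j hj]
    exact Set.Finite.subset (hfin (nrm S c)) this
  have hrel_refl : ∀ α, rel α α := fun α => ⟨1, fun j hj => by group⟩
  have hrel_symm : ∀ {α β}, rel α β → rel β α := by
    rintro α β ⟨c, hc⟩
    refine ⟨c⁻¹, fun j hj => ?_⟩
    rw [← hc j hj]
    group
  have hrel_trans : ∀ {α β γ}, rel α β → rel β γ → rel α γ := by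
    rintro α β γ ⟨c, hc⟩ ⟨c', hc'⟩
    refine ⟨c * c', fun j hj => ?_⟩
    rw [← hc j hj, ← hc' j hj]
    group
  set i0 : Fin κ := ⟨0, hκpos⟩ with hi0
  set z : ℕ → G := fun j => u j i0 with hz
  have hznrm : ∀ j ∈ B, nrm S (z j) = j := by
    intro j hj
    exact hTsub j (hBA₀ hj) (Finset.mem_coe.mpr (humem j (hBsub hj) i0))
  by_cases hall : ∀ β : Fin κ, rel i0 β
  · -- CASE A : single cluster, derive a contradiction
    exfalso
    choose c hcspec using fun β => hall β
    set P : Finset G := Finset.univ.image c with hP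
    obtain ⟨j₀, hj₀⟩ := hBinf.nonempty
    have hc_i0 : c i0 = 1 := by
      have h1 := hcspec i0 j₀ hj₀
      have h2 : (u j₀ i0)⁻¹ * u j₀ i0 = 1 := by group
      rw [h2] at h1
      exact h1.symm
    have h1P : (1 : G) ∈ P := by
      rw [← hc_i0]
      exact Finset.mem_image_of_mem c (Finset.mem_univ i0)
    -- translation identity : (z j)⁻¹ • T j = P
    have himage : ∀ j ∈ B, (fun v => (z j)⁻¹ * v) '' ↑(T j) = ↑P := by
      intro j hj
      ext v
      constructor
      · rintro ⟨t, ht, rfl⟩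
        obtain ⟨β, rfl⟩ := husurj j (hBsub hj) t (Finset.mem_coe.mp ht)
        have hthis := hcspec β j hj
        show (z j)⁻¹ * u j β ∈ (↑P : Set G)
        rw [show ((z j)⁻¹ * u j β : G) = c β from hthis]
        exact Finset.mem_coe.mpr (Finset.mem_image_of_mem c (Finset.mem_univ β))
      · intro hv
        rw [Finset.mem_coe, hP, Finset.mem_image] at hv
        obtain ⟨β, -, rfl⟩ := hv
        refine ⟨u j β, Finset.mem_coe.mpr (humem j (hBsub hj) β), ?_⟩
        rw [← hcspec β j hj]
    -- maximal norm of P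
    obtain ⟨RP, hRP⟩ := exists_maxnrm (S := S) (Finset.finite_toSet P)
    -- boundary points
    have hNBfin : {v : G | ∃ p ∈ (P : Finset G), (cayleyGraph S).Adj v p}.Finite := by
      have : {v : G | ∃ p ∈ (P : Finset G), (cayleyGraph S).Adj v p} =
          ⋃ p ∈ (P : Finset G), {v | (cayleyGraph S).Adj v p} := by
        ext v; simp [Set.mem_iUnion]
      rw [this]
      exact Set.Finite.biUnion (Finset.finite_toSet P) (fun p _ => neighbors_finite hS p)
    set B' : Set ℕ := {j ∈ B | RP < j} with hB'
    have hB'inf : B'.Infinite := by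
      have : B ⊆ B' ∪ (Set.Iic RP) := by
        intro j hj
        by_cases h : RP < j
        · exact Or.inl ⟨hj, h⟩
        · exact Or.inr (by simp only [Set.mem_Iic]; omega)
      intro hfin
      exact hBinf (Set.Finite.subset (hfin.union (Set.finite_Iic RP)) this)
    -- each j in B' yields a boundary point of its class
    have hbd : ∀ j ∈ B', ∃ a : G, Avoid S ↑P ((z j)⁻¹) a ∧
        a ∈ {v : G | ∃ p ∈ (P : Finset G), (cayleyGraph S).Adj v p} := by
      intro j hj
      obtain ⟨hjB, hjRP⟩ := hj
      obtain ⟨w0, -⟩ := exists_geodesic hgen ((z j)⁻¹)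
      have hstart : (z j)⁻¹ ∉ (↑P : Set G) := by
        intro hmem
        have hle := hRP _ hmem
        rw [nrm_inv, hznrm j hjB] at hle
        omega
      rcases split_first (S := S) w0.reverse hstart with hclean | ⟨a, ccc, hadj, hcP, w₁, hw₁, -⟩
      · exfalso
        apply hclean 1 (by simp [SimpleGraph.Walk.support_reverse]) h1P
      · exact ⟨a, ⟨w₁, hw₁⟩, ⟨ccc, hcP, hadj⟩⟩
    choose! wpt hwpt1 hwpt2 using hbd
    -- pigeonhole over boundary points
    have himg2 : ((fun j => wpt j) '' B').Finite := by
      apply Set.Finite.subset hNBfin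
      rintro x ⟨j, hj, rfl⟩
      exact hwpt2 j hj
    obtain ⟨w, -, hBwinf⟩ := pigeon_infinite hB'inf (fun j => wpt j) himg2
    set B'' : Set ℕ := {j ∈ B' | wpt j = w} with hB''
    -- the class of w is finite yet of unbounded cardinality
    set W : Set G := {v : G | Avoid S ↑P w v} with hW
    have hWeq : ∀ j ∈ B'', W = (fun x => (z j)⁻¹ * x) '' {x : G | Avoid S ↑(T j) 1 x} := by
      intro j hj
      have hav : Avoid S ↑P ((z j)⁻¹) w := by
        rw [← hj.2]
        exact hwpt1 j hj.1
      ext v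
      constructor
      · intro hv
        have h2 : Avoid S ↑P ((z j)⁻¹) v := hav.trans hv
        refine ⟨z j * v, ?_, by group⟩
        have h3 := avoid_translate (S := S) (z j) h2
        rw [show z j * (z j)⁻¹ = 1 by group] at h3
        have h4 : (fun v => z j * v) '' ((fun v => (z j)⁻¹ * v) '' ↑(T j)) = ↑(T j) := by
          rw [Set.image_image]
          simp
        rw [himage j hj.1.1] at h4
        rwa [h4] at h3
      · rintro ⟨x, hx, rfl⟩
        have h3 := avoid_translate (S := S) ((z j)⁻¹) hx
        rw [show ((z j)⁻¹ * 1 : G) = (z j)⁻¹ by group, himage j hj.1.1] at h3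
        exact hav.symm.trans h3
    obtain ⟨j₁, hj₁⟩ := hBwinf.nonempty
    have hWfin : W.Finite := by
      rw [hWeq j₁ hj₁]
      exact Set.Finite.image _ (hTfin j₁ (hBA₀ hj₁.1.1))
    have hWbig : ∀ j ∈ B'', j ≤ W.ncard := by
      intro j hj
      rw [hWeq j hj]
      rw [Set.ncard_image_of_injective _ (mul_right_injective ((z j)⁻¹))]
      have hsubball : ball S (j-1) ⊆ {x : G | Avoid S ↑(T j) 1 x} := by
        intro x hx
        apply ball_avoid hgen (hBA₀ hj.1.1).1 (hTsub j (hBA₀ hj.1.1))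
        have : nrm S x ≤ j - 1 := hx
        have : 1 ≤ j := (hBA₀ hj.1.1).1
        omega
      calc j = (j - 1) + 1 := by
              have : 1 ≤ j := (hBA₀ hj.1.1).1
              omega
        _ ≤ (ball S (j-1)).ncard := ball_ncard_lower hS hgen (j-1)
        _ ≤ {x : G | Avoid S ↑(T j) 1 x}.ncard :=
              Set.ncard_le_ncard hsubball (hTfin j (hBA₀ hj.1.1))
    obtain ⟨j₂, hj₂ge, hj₂⟩ := exists_ge_of_infinite hBwinf (W.ncard + 1)
    have := hWbig j₂ hj₂
    omega
  · -- CASE B : at least two clusters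
    push_neg at hall
    obtain ⟨β₀, hβ₀⟩ := hall
    set cls1 : Finset (Fin κ) := Finset.univ.filter (fun β => rel i0 β) with hcls1
    have hi0cls : i0 ∈ cls1 := by
      rw [hcls1, Finset.mem_filter]
      exact ⟨Finset.mem_univ _, hrel_refl i0⟩
    have hmemcls : ∀ β, β ∈ cls1 ↔ rel i0 β := by
      intro β
      rw [hcls1, Finset.mem_filter]
      simp
    have hβ₀cls : β₀ ∉ cls1 := fun h => hβ₀ ((hmemcls β₀).mp h)
    have hc' : ∀ β ∈ cls1, ∃ cc, ∀ j ∈ B, (u j i0)⁻¹ * u j β = cc :=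
      fun β hβ => (hmemcls β).mp hβ
    choose! c hcspec using hc'
    set P₁ : Finset G := cls1.image c with hP₁
    obtain ⟨j₀, hj₀⟩ := hBinf.nonempty
    have hc_i0 : c i0 = 1 := by
      have h1 := hcspec i0 hi0cls j₀ hj₀
      rw [show (u j₀ i0)⁻¹ * u j₀ i0 = 1 by group] at h1
      exact h1.symm
    have h1P : (1 : G) ∈ P₁ := by
      rw [← hc_i0, hP₁]
      exact Finset.mem_image_of_mem c hi0cls
    obtain ⟨RP, hRP⟩ := exists_maxnrm (S := S) (Finset.finite_toSet P₁)
    set C1 : ℕ → Finset G := fun j => cls1.image (u j) with hC1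
    set O : ℕ → Finset G := fun j => (T j) \ (C1 j) with hOdef
    have hC1subT : ∀ j ∈ B, C1 j ⊆ T j := by
      intro j hj t ht
      obtain ⟨β, hβ, rfl⟩ := Finset.mem_image.mp ht
      exact humem j (hBsub hj) β
    have hzC1 : ∀ j, z j ∈ C1 j := fun j => Finset.mem_image_of_mem _ hi0cls
    have hOsub : ∀ j, O j ⊆ (T j).erase (z j) := by
      intro j t ht
      rw [hOdef] at ht
      rw [Finset.mem_sdiff] at ht
      rw [Finset.mem_erase]
      exact ⟨fun he => ht.2 (he ▸ hzC1 j), ht.1⟩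
    have hTsubU : ∀ j, (↑(T j) : Set G) ⊆ ↑(C1 j) ∪ ↑(O j) := by
      intro j t ht
      by_cases h : t ∈ C1 j
      · exact Or.inl (Finset.mem_coe.mpr h)
      · refine Or.inr (Finset.mem_coe.mpr ?_)
        rw [hOdef, Finset.mem_sdiff]
        exact ⟨Finset.mem_coe.mp ht, h⟩
    have hOchar : ∀ j ∈ B, ∀ t ∈ O j, ∃ β', β' ∉ cls1 ∧ u j β' = t := by
      intro j hj t ht
      rw [hOdef, Finset.mem_sdiff] at ht
      obtain ⟨β', hβ'eq⟩ := husurj j (hBsub hj) t ht.1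
      refine ⟨β', fun hβ'cls1 => ?_, hβ'eq⟩
      exact ht.2 (hβ'eq ▸ Finset.mem_image_of_mem (u j) hβ'cls1)
    have himageC : ∀ j ∈ B, (fun v => (z j)⁻¹ * v) '' ↑(C1 j) = ↑P₁ := by
      intro j hj
      ext v
      constructor
      · rintro ⟨t, ht, rfl⟩
        obtain ⟨β, hβ, rfl⟩ := Finset.mem_image.mp (Finset.mem_coe.mp ht)
        have hthis := hcspec β hβ j hj
        show (z j)⁻¹ * u j β ∈ (↑P₁ : Set G)
        rw [show ((z j)⁻¹ * u j β : G) = c β from hthis]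
        exact Finset.mem_coe.mpr (Finset.mem_image_of_mem c hβ)
      · intro hv
        obtain ⟨β, hβ, rfl⟩ := Finset.mem_image.mp (Finset.mem_coe.mp hv)
        refine ⟨u j β, Finset.mem_coe.mpr (Finset.mem_image_of_mem _ hβ), ?_⟩
        rw [← hcspec β hβ j hj]
    have hC1nrm : ∀ j ∈ B, ∀ t ∈ C1 j, nrm S ((z j)⁻¹ * t) ≤ RP := by
      intro j hj t ht
      apply hRP
      have : (z j)⁻¹ * t ∈ (fun v => (z j)⁻¹ * v) '' ↑(C1 j) :=
        ⟨t, Finset.mem_coe.mpr ht, rfl⟩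
      rw [himageC j hj] at this
      exact Finset.mem_coe.mp this
    -- bound function for the finite classes
    have hMF : ∀ j ∈ B, ∃ M, ∀ x ∈ {x : G | Avoid S ↑(T j) 1 x}, nrm S x ≤ M :=
      fun j hj => exists_maxnrm (hTfin j (hBA₀ hj))
    choose! MF hMFspec using hMF
    -- the package : boundary points a, b and far witness wst
    have hpack : ∀ j ∈ B, ∃ ab : G × G × G,
        Avoid S ↑(T j) 1 ab.1 ∧ Avoid S ↑(T j) ab.2.2 ab.2.1 ∧
        nrm S ((z j)⁻¹ * ab.1) ≤ RP + 1 ∧ nrm S ((z j)⁻¹ * ab.2.1) ≤ RP + 1 ∧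
        MF j + 3*j < nrm S ab.2.2 := by
      intro j hj
      have hj1 : 1 ≤ j := (hBA₀ hj).1
      have hW₁inf : {x : G | Avoid S ↑(O j) 1 x}.Infinite := by
        intro hfin
        apply hTmin j (hBA₀ hj) (z j) (humem j (hBsub hj) i0)
        apply Set.Finite.subset hfin
        intro x hx
        exact Avoid.mono (Finset.coe_subset.mpr (hOsub j)) hx
      obtain ⟨wst, hwstmem, hwstnrm⟩ := exists_big_nrm hS hgen hW₁inf (MF j + 3*j)
      obtain ⟨Q, hQ⟩ := hwstmem
      have hnrmC1 : ∀ t ∈ C1 j, nrm S t = j := by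
        intro t ht
        exact hTsub j (hBA₀ hj) (Finset.mem_coe.mpr (hC1subT j hj ht))
      have h1C : (1 : G) ∉ (↑(C1 j) : Set G) := by
        intro hmem
        have := hnrmC1 1 (Finset.mem_coe.mp hmem)
        rw [nrm_one] at this
        omega
      have havoidT : ∀ {p q : G} (w' : (cayleyGraph S).Walk p q),
          (∀ v ∈ w'.support, v ∉ (↑(C1 j) : Set G)) →
          (∀ v ∈ w'.support, v ∉ (↑(O j) : Set G)) →
          (∀ v ∈ w'.support, v ∉ (↑(T j) : Set G)) := by
        intro p q w' h1 h2 v hv hvT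
        rcases hTsubU j hvT with h | h
        · exact h1 v hv h
        · exact h2 v hv h
      rcases split_first (S := S) Q h1C with hclean | ⟨a, ca, hadj, hca, w₁, hw₁, hw₁sub⟩
      · exfalso
        have hles : Avoid S ↑(T j) 1 wst :=
          ⟨Q, havoidT Q hclean (fun v hv => hQ v hv)⟩
        have := hMFspec j hj wst hles
        omega
      · have hwstC : wst ∉ (↑(C1 j) : Set G) := by
          intro hmem
          have := hnrmC1 wst (Finset.mem_coe.mp hmem)
          omega
        rcases split_first (S := S) Q.reverse hwstC with hclean2 | ⟨b, cb, hadj2, hcb, w₂, hw₂, hw₂sub⟩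
        · exfalso
          have hles : Avoid S ↑(T j) 1 wst := by
            refine ⟨Q, havoidT Q ?_ (fun v hv => hQ v hv)⟩
            intro v hv
            apply hclean2
            rw [SimpleGraph.Walk.support_reverse]
            exact List.mem_reverse.mpr hv
          have := hMFspec j hj wst hles
          omega
        · -- assemble the package
          have hQsub : ∀ v ∈ w₂.support, v ∈ Q.support := by
            intro v hv
            have := hw₂sub v hv
            rw [SimpleGraph.Walk.support_reverse] at this
            exact List.mem_reverse.mp this
          refine ⟨(a, b, wst), ?_, ?_, ?_, ?_, by simpa using hwstnrm⟩
          · exact ⟨w₁, havoidT w₁ hw₁ (fun v hv => hQ v (hw₁sub v hv))⟩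
          · exact ⟨w₂, havoidT w₂ hw₂ (fun v hv => hQ v (hQsub v hv))⟩
          · -- nrm ((z j)⁻¹ * a) ≤ RP + 1
            show nrm S ((z j)⁻¹ * a) ≤ RP + 1
            rw [← dist_eq_nrm]
            calc (cayleyGraph S).dist (z j) a
                ≤ (cayleyGraph S).dist (z j) ca + (cayleyGraph S).dist ca a :=
                  dist_triangle hgen _ _ _
              _ ≤ RP + 1 := by
                  have h1 : (cayleyGraph S).dist (z j) ca ≤ RP := by
                    rw [dist_eq_nrm]
                    exact hC1nrm j hj ca (Finset.mem_coe.mp hca)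
                  have h2 : (cayleyGraph S).dist ca a = 1 :=
                    SimpleGraph.dist_eq_one_iff_adj.mpr hadj.symm
                  omega
          · show nrm S ((z j)⁻¹ * b) ≤ RP + 1
            rw [← dist_eq_nrm]
            calc (cayleyGraph S).dist (z j) b
                ≤ (cayleyGraph S).dist (z j) cb + (cayleyGraph S).dist cb b :=
                  dist_triangle hgen _ _ _
              _ ≤ RP + 1 := by
                  have h1 : (cayleyGraph S).dist (z j) cb ≤ RP := by
                    rw [dist_eq_nrm]
                    exact hC1nrm j hj cb (Finset.mem_coe.mp hcb)
                  have h2 : (cayleyGraph S).dist cb b = 1 :=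
                    SimpleGraph.dist_eq_one_iff_adj.mpr hadj2.symm
                  omega
    choose! pack hpk1 hpk2 hpk3 hpk4 hpk5 using hpack
    -- pigeonhole over the normalised boundary pair
    have himg3 : ((fun j => (((z j)⁻¹ * (pack j).1 : G), ((z j)⁻¹ * (pack j).2.1 : G))) '' B).Finite := by
      apply Set.Finite.subset (Set.Finite.prod (ball_finite hS hgen (RP+1))
        (ball_finite hS hgen (RP+1)))
      rintro x ⟨j, hj, rfl⟩
      exact ⟨hpk3 j hj, hpk4 j hj⟩
    obtain ⟨αβ, -, hB₂inf⟩ := pigeon_infinite hBinf _ himg3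
    set B₂ : Set ℕ := {j ∈ B |
      (((z j)⁻¹ * (pack j).1 : G), ((z j)⁻¹ * (pack j).2.1 : G)) = αβ} with hB₂
    set av : G := αβ.1 with hav
    set bv : G := αβ.2 with hbv
    have hB₂a : ∀ j ∈ B₂, (z j)⁻¹ * (pack j).1 = av := by
      intro j hj
      have := hj.2
      rw [Prod.ext_iff] at this
      exact this.1
    have hB₂b : ∀ j ∈ B₂, (z j)⁻¹ * (pack j).2.1 = bv := by
      intro j hj
      have := hj.2
      rw [Prod.ext_iff] at this
      exact this.2
    have hB₂sub : B₂ ⊆ B := fun j hj => hj.1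
    -- the two avoidance classes
    set Sa : Set G := {v : G | Avoid S ↑P₁ av v} with hSa
    set Sb : Set G := {v : G | Avoid S ↑P₁ bv v} with hSb
    -- Sa contains translated copies of the finite classes
    have hSasup : ∀ j ∈ B₂, (fun x => (z j)⁻¹ * x) '' {x : G | Avoid S ↑(T j) 1 x} ⊆ Sa := by
      rintro j hj v ⟨x, hx, rfl⟩
      have h1 : Avoid S ↑(T j) (pack j).1 x := (hpk1 j (hB₂sub hj)).symm.trans hx
      have h2 : Avoid S ↑(C1 j) (pack j).1 x :=
        h1.mono (Finset.coe_subset.mpr (hC1subT j (hB₂sub hj)))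
      have h3 := avoid_translate (S := S) ((z j)⁻¹) h2
      rw [himageC j (hB₂sub hj), hB₂a j hj] at h3
      exact h3
    have hSainf : Sa.Infinite := by
      intro hfin
      obtain ⟨j, hjge, hj⟩ := exists_ge_of_infinite hB₂inf (Sa.ncard + 1)
      have hsub := hSasup j hj
      have hcard1 : {x : G | Avoid S ↑(T j) 1 x}.ncard ≥ j := by
        have hsubball : ball S (j-1) ⊆ {x : G | Avoid S ↑(T j) 1 x} := by
          intro x hx
          apply ball_avoid hgen (hBA₀ (hB₂sub hj)).1 (hTsub j (hBA₀ (hB₂sub hj)))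
          have h5 : nrm S x ≤ j - 1 := hx
          have h6 : 1 ≤ j := (hBA₀ (hB₂sub hj)).1
          omega
        calc j = (j-1) + 1 := by
                have h6 : 1 ≤ j := (hBA₀ (hB₂sub hj)).1
                omega
          _ ≤ (ball S (j-1)).ncard := ball_ncard_lower hS hgen (j-1)
          _ ≤ _ := Set.ncard_le_ncard hsubball (hTfin j (hBA₀ (hB₂sub hj)))
      have hcard2 : ((fun x => (z j)⁻¹ * x) '' {x : G | Avoid S ↑(T j) 1 x}).ncard =
          {x : G | Avoid S ↑(T j) 1 x}.ncard :=
        Set.ncard_image_of_injective _ (mul_right_injective ((z j)⁻¹))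
      have := Set.ncard_le_ncard hsub hfin
      omega
    -- Sb has points of unbounded norm
    have hSbbig : ∀ m : ℕ, ∃ y ∈ Sb, m ≤ nrm S y := by
      intro m
      obtain ⟨j, hjge, hj⟩ := exists_ge_of_infinite hB₂inf m
      refine ⟨(z j)⁻¹ * (pack j).2.2, ?_, ?_⟩
      · have h1 : Avoid S ↑(T j) (pack j).2.1 (pack j).2.2 := (hpk2 j (hB₂sub hj)).symm
        have h2 : Avoid S ↑(C1 j) (pack j).2.1 (pack j).2.2 :=
          h1.mono (Finset.coe_subset.mpr (hC1subT j (hB₂sub hj)))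
        have h3 := avoid_translate (S := S) ((z j)⁻¹) h2
        rw [himageC j (hB₂sub hj), hB₂b j hj] at h3
        exact h3
      · have h1 := hpk5 j (hB₂sub hj)
        have h2 : nrm S ((z j)⁻¹) = j := by rw [nrm_inv]; exact hznrm j (hB₂sub hj)
        have h3 : nrm S ((pack j).2.2) ≤ nrm S ((z j)⁻¹ * (pack j).2.2) + nrm S ((z j)⁻¹) := by
          have h4 := nrm_mul_le hgen (z j) ((z j)⁻¹ * (pack j).2.2)
          rw [show (z j * ((z j)⁻¹ * (pack j).2.2) : G) = (pack j).2.2 by group] at h4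
          have h5 : nrm S (z j) = j := hznrm j (hB₂sub hj)
          omega
        omega
    -- av and bv are not avoid-connected
    have hab : ¬ Avoid S ↑P₁ av bv := by
      rintro ⟨W₀, hW₀⟩
      obtain ⟨RW, hRW⟩ := exists_max_list (S := S) W₀.support
      -- the bad set of levels
      have hBadfin : {j ∈ B | ∃ β' : Fin κ, β' ∉ cls1 ∧
          nrm S ((u j i0)⁻¹ * u j β') ≤ RW}.Finite := by
        have hsub : {j ∈ B | ∃ β' : Fin κ, β' ∉ cls1 ∧
            nrm S ((u j i0)⁻¹ * u j β') ≤ RW} ⊆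
            ⋃ β' ∈ (cls1ᶜ : Finset (Fin κ)), {j ∈ B | nrm S ((u j i0)⁻¹ * u j β') ≤ RW} := by
          rintro j ⟨hjB, β', hβ', hle⟩
          exact Set.mem_biUnion (Finset.mem_compl.mpr hβ') ⟨hjB, hle⟩
        apply Set.Finite.subset ?_ hsub
        apply Set.Finite.biUnion (Finset.finite_toSet _)
        intro β' hβ'
        have hnrel : ¬ rel i0 β' := fun hr =>
          (Finset.mem_compl.mp hβ') ((hmemcls β').mpr hr)
        rcases hdich i0 β' with hr | hfin
        · exact absurd hr hnrel
        · exact hfin RW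
      obtain ⟨j, hjmem⟩ := (hB₂inf.diff hBadfin).nonempty
      obtain ⟨hjB₂, hjBad⟩ := Set.mem_diff _ |>.mp hjmem
      have hjB : j ∈ B := hB₂sub hjB₂
      -- translated walk from a to b avoiding T j
      have hend1 : (leftMul S (z j)).toHom av = (pack j).1 := by
        show z j * av = (pack j).1
        rw [← hB₂a j hjB₂]
        group
      have hend2 : (leftMul S (z j)).toHom bv = (pack j).2.1 := by
        show z j * bv = (pack j).2.1
        rw [← hB₂b j hjB₂]
        group
      set Wt := (W₀.map (leftMul S (z j)).toHom).copy hend1 hend2 with hWt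
      have hWtav : ∀ v ∈ Wt.support, v ∉ (↑(T j) : Set G) := by
        intro v hv
        rw [hWt, SimpleGraph.Walk.support_copy, SimpleGraph.Walk.support_map] at hv
        obtain ⟨v₀, hv₀, rfl⟩ := List.mem_map.mp hv
        intro hvT
        rcases hTsubU j hvT with hC | hO
        · -- in the first cluster : v₀ ∈ P₁
          apply hW₀ v₀ hv₀
          have : (z j)⁻¹ * ((leftMul S (z j)).toHom v₀) ∈
              (fun v => (z j)⁻¹ * v) '' ↑(C1 j) := ⟨_, hC, rfl⟩
          rw [himageC j hjB] at this
          have heq : (z j)⁻¹ * ((leftMul S (z j)).toHom v₀) = v₀ := by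
            show (z j)⁻¹ * (z j * v₀) = v₀
            group
          rwa [heq] at this
        · -- in the other clusters : j would be bad
          apply hjBad
          obtain ⟨β', hβ'cls, hβ'eq⟩ := hOchar j hjB _ (Finset.mem_coe.mp hO)
          refine ⟨hjB, β', hβ'cls, ?_⟩
          have heq : (u j i0)⁻¹ * u j β' = v₀ := by
            rw [hβ'eq]
            show (z j)⁻¹ * ((leftMul S (z j)).toHom v₀) = v₀
            show (z j)⁻¹ * (z j * v₀) = v₀
            group
          rw [heq]
          exact hRW v₀ hv₀
      -- assemble contradiction
      have hchain : Avoid S ↑(T j) 1 ((pack j).2.2) :=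
        ((hpk1 j hjB).trans ⟨Wt, hWtav⟩).trans (hpk2 j hjB).symm
      have := hMFspec j hjB _ hchain
      have := hpk5 j hjB
      omega
    -- produce the final separated deep points
    obtain ⟨x, hxSa, hxnrm⟩ := exists_big_nrm hS hgen hSainf (2*RP+2)
    obtain ⟨y, hySb, hynrm⟩ := hSbbig (nrm S x + (2*RP+2))
    refine ⟨RP, x, y, by omega, by omega, ?_⟩
    intro hAv
    apply hab
    have hP₁ball : (↑P₁ : Set G) ⊆ ball S RP := by
      intro p hp
      exact hRP p hp
    exact (hxSa.trans (hAv.mono hP₁ball)).trans hySb.symm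

end VC

/-- If there is a sequence of positive integers `rᵢ → ∞` such that the sizes `|S(rᵢ)|`
of the spheres of radius `rᵢ` converge to a finite limit, then `G` is virtually cyclic. -/
theorem virtually_cyclic_of_bounded_spheres {G : Type*} [Group G] (S : Set G) (hS : S.Finite)
    (hgen : Subgroup.closure S = ⊤) (r : ℕ → ℕ) (hrpos : ∀ i, 0 < r i)
    (hr : Filter.Tendsto r Filter.atTop Filter.atTop)
    (hlim : ∃ L : ℕ, Filter.Tendsto (fun i => (cayleySphere S (r i)).ncard)
      Filter.atTop (nhds L)) :
    ∃ H : Subgroup G, IsCyclic H ∧ H.FiniteIndex := by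
  classical
  rcases finite_or_infinite G with hfin | hinf
  · haveI : Finite (G ⧸ (⊥ : Subgroup G)) := Quotient.finite _
    exact ⟨⊥, inferInstance, Subgroup.finiteIndex_of_finite_quotient⟩
  · obtain ⟨L, hlim⟩ := hlim
    have hev : ∀ᶠ i in Filter.atTop, (cayleySphere S (r i)).ncard = L := by
      have hopen : {L} ∈ nhds L := by
        exact IsOpen.mem_nhds (isOpen_discrete _) rfl
      exact hlim.eventually_mem hopen
    obtain ⟨i₀, hi₀⟩ := Filter.eventually_atTop.mp hev
    have hA : ∀ N, ∃ j, N ≤ j ∧ 1 ≤ j ∧ (cayleySphere S j).ncard ≤ L := by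
      intro N
      obtain ⟨i₁, hi₁⟩ := Filter.eventually_atTop.mp (hr.eventually_ge_atTop N)
      exact ⟨r (max i₀ i₁), hi₁ _ (le_max_right _ _), hrpos _,
        le_of_eq (hi₀ _ (le_max_left _ _))⟩
    have hball : ∀ k, (VC.ball S k).ncard ≤ (2*k+1) * L := by
      intro k
      obtain ⟨j, hj1, hj2, hj3⟩ := hA k
      calc (VC.ball S k).ncard ≤ (2*k+1) * (cayleySphere S j).ncard :=
            VC.packing hS hgen hj1
        _ ≤ (2*k+1) * L := Nat.mul_le_mul_left _ hj3
    by_cases hD : ∃ (n : ℕ) (g : G), 2*n+2 ≤ VC.nrm S g ∧ ¬ VC.Avoid S (VC.ball S n) g g⁻¹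
    · obtain ⟨n, g, hg1, hg2⟩ := hD
      have hio := VC.infinite_order_of_trap hgen hg1 hg2
      exact ⟨Subgroup.zpowers g, VC.isCyclic_zpowers g,
        VC.finiteIndex_zpowers hS hgen hio hball⟩
    · push_neg at hD
      obtain ⟨n, x, y, hx, hy, hxy⟩ := VC.exists_separated_deep_points hS hgen hA
      obtain ⟨zg, hzg⟩ := VC.infinite_order_of_two_comps hgen
        (fun h hh => hD n h hh) hx hy hxy
      exact ⟨Subgroup.zpowers zg, VC.isCyclic_zpowers zg,
        VC.finiteIndex_zpowers hS hgen hzg hball⟩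
end

section
/- (Distant Galaxies Lemma) Let (Y,d) be a finite metric space with exactly n elements and let a be an integer greater than 2. If diam(Y) > (2a+1)^{n+2}, then there exists a gl-partition A = ({A_i}_{i=1}^{n}, n, a) of Y. -/
/-- The distance between two subsets of a metric space:
`d(A,B) = inf {d(x,y) | x ∈ A, y ∈ B}`. -/
noncomputable def setDist {Y : Type*} [MetricSpace Y] (A B : Set Y) : ℝ :=
  sInf (Set.image2 dist A B)

lemma gl_small {Y : Type*} [MetricSpace Y] (P : Finset (Set Y)) (M : ℝ) (hM : 0 ≤ M)
    (hcard : P.card ≤ 1) (hcover : ⋃₀ ↑P = (Set.univ : Set Y))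
    (hd : ∀ A ∈ P, Metric.diam A ≤ M) : Metric.diam (Set.univ : Set Y) ≤ M := by
  rcases P.eq_empty_or_nonempty with h | ⟨A, hA⟩
  · rw [← hcover, h]
    simp [Metric.diam_empty, hM]
  · have hall : ∀ B ∈ P, B = A := fun B hB => Finset.card_le_one.mp hcard B hB A hA
    have : ⋃₀ ↑P = A := by
      apply subset_antisymm
      · rintro z ⟨B, hB, hz⟩
        rwa [← hall B hB]
      · intro z hz
        exact ⟨A, hA, hz⟩
    rw [← hcover, this]
    exact hd A hA

lemma gl_key {Y : Type*} [MetricSpace Y] [Fintype Y] (a : ℕ) (ha : 1 ≤ a) (k : ℕ) :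
    ∀ (P : Finset (Set Y)) (M : ℝ), P.card ≤ k + 1 → 1 ≤ M →
    (∀ A ∈ P, A.Nonempty) →
    (∀ A ∈ P, ∀ B ∈ P, A = B ∨ A ∩ B = ∅) →
    (⋃₀ ↑P) = (Set.univ : Set Y) →
    (∀ A ∈ P, Metric.diam A ≤ M) →
    Metric.diam (Set.univ : Set Y) ≤ ((a : ℝ) + 2) ^ k * M ∨
    ∃ Q : Finset (Set Y), 2 ≤ Q.card ∧ (∀ A ∈ Q, A.Nonempty) ∧
      (∀ A ∈ Q, ∀ B ∈ Q, A = B ∨ A ∩ B = ∅) ∧ (⋃₀ ↑Q) = (Set.univ : Set Y) ∧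
      ∃ MQ : ℝ, 1 ≤ MQ ∧ (∀ A ∈ Q, Metric.diam A ≤ MQ) ∧
        (∀ A ∈ Q, ∀ x ∈ A, ∀ y, y ∉ A → (a : ℝ) * MQ < dist x y) := by
  classical
  induction k with
  | zero =>
    intro P M hcard hM hne hdisj hcover hd
    exact Or.inl (by simpa using gl_small P M (by linarith) hcard hcover hd)
  | succ k ih =>
    intro P M hcard hM hne hdisj hcover hd
    by_cases hsmall : P.card ≤ 1
    · left
      have h1 : (1:ℝ) ≤ ((a:ℝ) + 2) ^ (k+1) := one_le_pow₀ (by push_cast; linarith)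
      have := gl_small P M (by linarith) hsmall hcover hd
      nlinarith
    push_neg at hsmall
    by_cases hgood : ∀ A ∈ P, ∀ x ∈ A, ∀ y, y ∉ A → (a : ℝ) * M < dist x y
    · exact Or.inr ⟨P, hsmall, hne, hdisj, hcover, M, hM, hd, hgood⟩
    push_neg at hgood
    obtain ⟨A, hA, x, hx, y, hyA, hxy⟩ := hgood
    have hyuniv : y ∈ ⋃₀ (↑P : Set (Set Y)) := by rw [hcover]; trivial
    obtain ⟨B, hB, hyB⟩ := hyuniv
    have hAB : A ≠ B := fun h => hyA (h ▸ hyB)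
    set P₂ : Finset (Set Y) := (P.erase A).erase B with hP₂
    have hBmem : B ∈ P.erase A := Finset.mem_erase.mpr ⟨hAB.symm, hB⟩
    have hP₂sub : ∀ C ∈ P₂, C ∈ P ∧ C ≠ A ∧ C ≠ B := by
      intro C hC
      have h1 := Finset.mem_erase.mp hC
      have h2 := Finset.mem_erase.mp h1.2
      exact ⟨h2.2, h2.1, h1.1⟩
    set P' : Finset (Set Y) := insert (A ∪ B) P₂ with hP'
    have hcard' : P'.card ≤ k + 1 := by
      have h2 : P₂.card = P.card - 2 := by
        rw [hP₂, Finset.card_erase_of_mem hBmem, Finset.card_erase_of_mem hA]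
        omega
      have h3 := Finset.card_insert_le (A ∪ B) P₂
      rw [hP']
      omega
    set M' : ℝ := ((a : ℝ) + 2) * M with hM'
    have hMpos : (0:ℝ) < M := by linarith
    have hMM' : M ≤ M' := by nlinarith [(by exact_mod_cast ha : (1:ℝ) ≤ (a:ℝ))]
    have hM'1 : 1 ≤ M' := le_trans hM hMM'
    have hmem' : ∀ C ∈ P', C = A ∪ B ∨ C ∈ P₂ := fun C hC => Finset.mem_insert.mp hC
    have hdisjAB : ∀ C ∈ P₂, (A ∪ B) ∩ C = ∅ := by
      intro C hC
      obtain ⟨hCP, hCA, hCB⟩ := hP₂sub C hC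
      have h1 : A ∩ C = ∅ := (hdisj A hA C hCP).resolve_left (fun h => hCA h.symm)
      have h2 : B ∩ C = ∅ := (hdisj B hB C hCP).resolve_left (fun h => hCB h.symm)
      rw [Set.union_inter_distrib_right, h1, h2, Set.union_empty]
    have hres := ih P' M' hcard' hM'1
      (by
        intro C hC
        rcases hmem' C hC with rfl | hC2
        · exact (hne A hA).mono Set.subset_union_left
        · exact hne C (hP₂sub C hC2).1)
      (by
        intro C hC D hD
        rcases hmem' C hC with rfl | hC2 <;> rcases hmem' D hD with rfl | hD2
        · exact Or.inl rfl
        · exact Or.inr (hdisjAB D hD2)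
        · exact Or.inr (by rw [Set.inter_comm]; exact hdisjAB C hC2)
        · exact hdisj C (hP₂sub C hC2).1 D (hP₂sub D hD2).1)
      (by
        apply Set.eq_univ_of_forall
        intro z
        have hz : z ∈ ⋃₀ (↑P : Set (Set Y)) := by rw [hcover]; trivial
        obtain ⟨C, hC, hzC⟩ := hz
        by_cases h1 : C = A
        · exact ⟨A ∪ B, Finset.mem_insert_self _ _, Or.inl (h1 ▸ hzC)⟩
        by_cases h2 : C = B
        · exact ⟨A ∪ B, Finset.mem_insert_self _ _, Or.inr (h2 ▸ hzC)⟩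
        · exact ⟨C, Finset.mem_insert_of_mem
            (Finset.mem_erase.mpr ⟨h2, Finset.mem_erase.mpr ⟨h1, hC⟩⟩), hzC⟩)
      (by
        intro C hC
        rcases hmem' C hC with rfl | hC2
        · have hd1 := hd A hA
          have hd2 := hd B hB
          have := Metric.diam_union hx hyB
          rw [hM']
          push_cast
          nlinarith
        · exact le_trans (hd C (hP₂sub C hC2).1) hMM')
    rcases hres with h | h
    · left
      rw [hM'] at h
      calc Metric.diam (Set.univ : Set Y) ≤ ((a:ℝ) + 2) ^ k * (((a:ℝ) + 2) * M) := h
        _ = ((a:ℝ) + 2) ^ (k+1) * M := by ring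
    · exact Or.inr h

/-- `({Aᵢ}ᵢ, m, a)` is a gl-partition of the metric space `Y`: the `Aᵢ` are `m ≥ 2` nonempty
sets (`a` a positive integer), any two of which are equal or disjoint, covering `Y`, and each
of which is at distance greater than `a · max {diam Aⱼ, 1}` from its complement. -/
def IsGlPartition {Y : Type*} [MetricSpace Y] {m : ℕ} (A : Fin m → Set Y) (a : ℕ) : Prop :=
  2 ≤ m ∧ 0 < a ∧ (∀ i, (A i).Nonempty) ∧
  (∀ i j, A i = A j ∨ A i ∩ A j = ∅) ∧
  (⋃ i, A i) = Set.univ ∧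
  ∀ i, (a : ℝ) * (⨆ j, max (Metric.diam (A j)) 1) < setDist (A i) (Set.univ \ A i)

/-- **Distant Galaxies Lemma.** A finite metric space with `n` elements and diameter greater
than `(2a+1)^(n+2)` (where `a > 2` is an integer) admits a gl-partition `({Aᵢ}ᵢ₌₁ⁿ, n, a)`. -/
theorem distant_galaxies {Y : Type*} [MetricSpace Y] [Fintype Y] (n a : ℕ)
    (hcard : Fintype.card Y = n) (ha : 2 < a)
    (hdiam : ((2 * a + 1 : ℕ) : ℝ) ^ (n + 2) < Metric.diam (Set.univ : Set Y)) :
    ∃ A : Fin n → Set Y, IsGlPartition A a := by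
  classical
  have hbase : (1:ℝ) ≤ ((2 * a + 1 : ℕ) : ℝ) := by push_cast; linarith
  -- n ≥ 2
  have hn2 : 2 ≤ n := by
    by_contra h
    push_neg at h
    have : Fintype.card Y ≤ 1 := by omega
    have hsub : (Set.univ : Set Y).Subsingleton := by
      intro u _ v _
      haveI := Fintype.card_le_one_iff_subsingleton.mp this
      exact Subsingleton.elim u v
    have := Metric.diam_subsingleton hsub
    have h1 : (1:ℝ) ≤ ((2 * a + 1 : ℕ) : ℝ) ^ (n + 2) := one_le_pow₀ hbase
    linarith
  haveI : Nonempty Y := by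
    rw [← Fintype.card_pos_iff]; omega
  -- initial partition of singletons
  set P0 : Finset (Set Y) := Finset.univ.image (fun x : Y => ({x} : Set Y)) with hP0
  have hP0card : P0.card = n := by
    rw [hP0, Finset.card_image_of_injective _ Set.singleton_injective, Finset.card_univ, hcard]
  have hkey := gl_key a (by omega) (n - 1) P0 1 (by omega) le_rfl
    (by rintro A hA; obtain ⟨x, _, rfl⟩ := Finset.mem_image.mp hA; exact ⟨x, rfl⟩)
    (by
      rintro A hA B hB
      obtain ⟨x, _, rfl⟩ := Finset.mem_image.mp hA
      obtain ⟨y, _, rfl⟩ := Finset.mem_image.mp hB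
      by_cases h : x = y
      · exact Or.inl (by rw [h])
      · exact Or.inr (by
          ext z
          simp only [Set.mem_inter_iff, Set.mem_singleton_iff, Set.mem_empty_iff_false,
            iff_false, not_and]
          rintro rfl; exact h))
    (by
      apply Set.eq_univ_of_forall
      intro z
      exact ⟨{z}, Finset.mem_image.mpr ⟨z, Finset.mem_univ _, rfl⟩, rfl⟩)
    (by
      rintro A hA
      obtain ⟨x, _, rfl⟩ := Finset.mem_image.mp hA
      simp [Metric.diam_singleton])
  rcases hkey with h | h
  · -- contradiction with hdiam
    exfalso
    have h1 : ((a:ℝ) + 2) ^ (n - 1) ≤ ((2 * a + 1 : ℕ) : ℝ) ^ (n - 1) :=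
      pow_le_pow_left₀ (by positivity)
        (by have h3 : (2:ℝ) < (a:ℝ) := by exact_mod_cast ha
            push_cast; linarith) _
    have h2 : ((2 * a + 1 : ℕ) : ℝ) ^ (n - 1) ≤ ((2 * a + 1 : ℕ) : ℝ) ^ (n + 2) :=
      pow_le_pow_right₀ hbase (by omega)
    rw [mul_one] at h
    linarith
  · obtain ⟨Q, hQ2, hQne, hQdisj, hQcover, MQ, hMQ1, hQdiam, hQdist⟩ := h
    -- Q.card ≤ n
    have hqn : Q.card ≤ n := by
      have : Q.card ≤ Fintype.card Y := by
        rw [← Finset.card_univ]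
        apply Finset.card_le_card_of_injOn
          (fun S => if h : S.Nonempty then h.choose else Classical.arbitrary Y)
        · intro S _; exact Finset.mem_univ _
        · intro S hS T hT hST
          have hSne := hQne S hS
          have hTne := hQne T hT
          simp only [dif_pos hSne, dif_pos hTne] at hST
          rcases hQdisj S hS T hT with h | h
          · exact h
          · exfalso
            have h1 : hSne.choose ∈ S := hSne.choose_spec
            have h2 : hTne.choose ∈ T := hTne.choose_spec
            rw [hST] at h1
            have : hTne.choose ∈ S ∩ T := ⟨h1, h2⟩
            rw [h] at this
            exact this
      omega
    set q := Q.card with hq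
    have hq1 : q - 1 < q := by omega
    set A : Fin n → Set Y := fun i =>
      ((Q.equivFin.symm ⟨min i.1 (q - 1), lt_of_le_of_lt (Nat.min_le_right _ _) hq1⟩ : Q) : Set Y)
      with hAdef
    have hAmem : ∀ i, A i ∈ Q := fun i => (Q.equivFin.symm _).2
    have hAsurj : ∀ B ∈ Q, ∃ i, A i = B := by
      intro B hB
      set j := Q.equivFin ⟨B, hB⟩ with hj
      have hjq : j.1 < q := j.2
      refine ⟨⟨j.1, by omega⟩, ?_⟩
      have hmin : min j.1 (q - 1) = j.1 := Nat.min_eq_left (by omega)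
      rw [hAdef]
      simp only
      have : (⟨min j.1 (q-1), lt_of_le_of_lt (Nat.min_le_right _ _) hq1⟩ : Fin q) = j := by
        exact Fin.ext hmin
      rw [this, hj, Equiv.symm_apply_apply]
    haveI : Nonempty (Fin n) := ⟨⟨0, by omega⟩⟩
    refine ⟨A, hn2, by omega, fun i => hQne _ (hAmem i), fun i j => hQdisj _ (hAmem i) _ (hAmem j),
      ?_, ?_⟩
    · apply Set.eq_univ_of_forall
      intro z
      have hz : z ∈ ⋃₀ (↑Q : Set (Set Y)) := by rw [hQcover]; trivial
      obtain ⟨B, hB, hzB⟩ := hz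
      obtain ⟨i, rfl⟩ := hAsurj B hB
      exact Set.mem_iUnion.mpr ⟨i, hzB⟩
    · intro i
      have hsup : (⨆ j, max (Metric.diam (A j)) 1) ≤ MQ :=
        ciSup_le fun j => max_le (hQdiam _ (hAmem j)) hMQ1
      have hstep1 : (a:ℝ) * (⨆ j, max (Metric.diam (A j)) 1) ≤ (a:ℝ) * MQ :=
        mul_le_mul_of_nonneg_left hsup (by positivity)
      refine lt_of_le_of_lt hstep1 ?_
      -- the complement is nonempty
      have hAi := hAmem i
      obtain ⟨C, hC, hCA⟩ : ∃ C ∈ Q, C ≠ A i := by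
        by_contra hc
        push_neg at hc
        have : Q.card ≤ 1 := Finset.card_le_one.mpr (fun u hu v hv => (hc u hu).trans (hc v hv).symm)
        omega
      obtain ⟨c, hc⟩ := hQne C hC
      have hcnotAi : c ∉ A i := by
        rcases hQdisj C hC (A i) hAi with h | h
        · exact absurd h hCA
        · intro hcc
          have : c ∈ C ∩ A i := ⟨hc, hcc⟩
          rw [h] at this
          exact this
      obtain ⟨x0, hx0⟩ := hQne _ hAi
      have hSne : (Set.image2 dist (A i) (Set.univ \ A i)).Nonempty :=
        ⟨dist x0 c, Set.mem_image2_of_mem hx0 ⟨trivial, hcnotAi⟩⟩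
      have hSfin : (Set.image2 dist (A i) (Set.univ \ A i)).Finite :=
        Set.Finite.image2 _ (Set.toFinite _) (Set.toFinite _)
      have hmem := hSne.csInf_mem hSfin
      rw [setDist]
      obtain ⟨x, hxA, y, hy, heq⟩ := hmem
      rw [← heq]
      exact hQdist _ hAi x hxA y hy.2
end
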